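/- arXiv:1204.5703 — 6 statements merged into one kernel-verified Lean document; each statement's English description precedes it below -/
import Mathlib

section
/- For a scalar admissible system (f,g), if ε < ε* (the potential threshold), then U(x;ε) > 0 for all x ∈ (0,1]. -/
open MeasureTheory Set Filter Topology

noncomputable section

/-- A scalar admissible system `(f, g)` parameterized by `ε ∈ [0,1]`:
`f : [0,1]×[0,1] → [0,1]` is strictly increasing in both arguments for `x, ε ∈ (0,1]`,
`g : [0,1] → [0,1]` has `g'(x) > 0` for `x ∈ (0,1)`, `f(0;ε) = f(x;0) = g(0) = 0`,
and `f, g` have continuous second derivatives on `[0,1]` w.r.t. all arguments. -/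
structure ScalarAdmissible (f : ℝ → ℝ → ℝ) (g : ℝ → ℝ) : Prop where
  f_mem : ∀ x ∈ Icc (0:ℝ) 1, ∀ ε ∈ Icc (0:ℝ) 1, f x ε ∈ Icc (0:ℝ) 1
  g_mem : ∀ x ∈ Icc (0:ℝ) 1, g x ∈ Icc (0:ℝ) 1
  f_mono_x : ∀ ε ∈ Ioc (0:ℝ) 1, StrictMonoOn (fun x => f x ε) (Ioc (0:ℝ) 1)
  f_mono_eps : ∀ x ∈ Ioc (0:ℝ) 1, StrictMonoOn (fun ε => f x ε) (Ioc (0:ℝ) 1)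
  g_deriv_pos : ∀ x ∈ Ioo (0:ℝ) 1, 0 < deriv g x
  f_zero_left : ∀ ε ∈ Icc (0:ℝ) 1, f 0 ε = 0
  f_zero_right : ∀ x ∈ Icc (0:ℝ) 1, f x 0 = 0
  g_zero : g 0 = 0
  f_smooth : ContDiffOn ℝ 2 (fun p : ℝ × ℝ => f p.1 p.2) (Icc (0:ℝ) 1 ×ˢ Icc (0:ℝ) 1)
  g_smooth : ContDiffOn ℝ 2 g (Icc (0:ℝ) 1)

/-- The single-system potential `U(x;ε) = ∫₀ˣ (z − f(g(z);ε)) g'(z) dz`. -/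
def singlePotential (f : ℝ → ℝ → ℝ) (g : ℝ → ℝ) (x ε : ℝ) : ℝ :=
  ∫ z in (0:ℝ)..x, (z - f (g z) ε) * deriv g z

/-- `u(ε) = sup { x̃ ∈ [0,1] : f(g(x);ε) < x for all x ∈ (0,x̃) }`,
the minimum unstable fixed point. -/
def uFix (f : ℝ → ℝ → ℝ) (g : ℝ → ℝ) (ε : ℝ) : ℝ :=
  sSup {xt : ℝ | xt ∈ Icc (0:ℝ) 1 ∧ ∀ x : ℝ, 0 < x → x < xt → f (g x) ε < x}

/-- The energy gap `ΔE(ε) = min_{x ∈ [u(ε),1]} U(x;ε)`. -/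
def energyGap (f : ℝ → ℝ → ℝ) (g : ℝ → ℝ) (ε : ℝ) : ℝ :=
  sInf ((fun x => singlePotential f g x ε) '' Icc (uFix f g ε) 1)

/-- The potential threshold
`ε* = sup { ε ∈ [0,1] : u(ε) > 0 and min_{x ∈ [u(ε),1]} U(x;ε) ≥ 0 }`. -/
def potentialThreshold (f : ℝ → ℝ → ℝ) (g : ℝ → ℝ) : ℝ :=
  sSup {ε : ℝ | ε ∈ Icc (0:ℝ) 1 ∧ 0 < uFix f g ε ∧ 0 ≤ energyGap f g ε}

/-- For a scalar admissible system `(f,g)`, if `ε < ε*` (the potential threshold), then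
`U(x;ε) > 0` for all `x ∈ (0,1]`. -/
theorem potential_pos_below_threshold (f : ℝ → ℝ → ℝ) (g : ℝ → ℝ)
    (hsys : ScalarAdmissible f g) (ε : ℝ) (hε : 0 ≤ ε)
    (hlt : ε < potentialThreshold f g) :
    ∀ x ∈ Ioc (0:ℝ) 1, 0 < singlePotential f g x ε := by
  -- extract ε' from the threshold
  have hTbdd : BddAbove {ε : ℝ | ε ∈ Icc (0:ℝ) 1 ∧ 0 < uFix f g ε ∧ 0 ≤ energyGap f g ε} :=
    ⟨1, fun t ht => ht.1.2⟩
  have hTne : {ε : ℝ | ε ∈ Icc (0:ℝ) 1 ∧ 0 < uFix f g ε ∧ 0 ≤ energyGap f g ε}.Nonempty := by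
    by_contra h
    rw [Set.not_nonempty_iff_eq_empty] at h
    rw [potentialThreshold, h, Real.sSup_empty] at hlt
    linarith
  have hlt' : ε < sSup {ε : ℝ | ε ∈ Icc (0:ℝ) 1 ∧ 0 < uFix f g ε ∧ 0 ≤ energyGap f g ε} := hlt
  obtain ⟨ε', hε'T, hεε'⟩ := exists_lt_of_lt_csSup hTne hlt'
  obtain ⟨⟨hε'0, hε'1⟩, hu, hE⟩ := hε'T
  have hεI : ε ∈ Icc (0:ℝ) 1 := ⟨hε, le_trans hεε'.le hε'1⟩
  have hε'I : ε' ∈ Icc (0:ℝ) 1 := ⟨hε'0, hε'1⟩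
  -- the derivative of g, continuous version
  have hG_cont : ContinuousOn (fun z => derivWithin g (Icc (0:ℝ) 1) z) (Icc (0:ℝ) 1) :=
    hsys.g_smooth.continuousOn_derivWithin (uniqueDiffOn_Icc one_pos) (by norm_num)
  have hGd : ∀ z ∈ Ioo (0:ℝ) 1, deriv g z = derivWithin g (Icc (0:ℝ) 1) z := by
    intro z hz
    exact (derivWithin_of_mem_nhds (Icc_mem_nhds hz.1 hz.2)).symm
  have hGpos : ∀ z ∈ Ioo (0:ℝ) 1, 0 < derivWithin g (Icc (0:ℝ) 1) z := by
    intro z hz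
    rw [← hGd z hz]
    exact hsys.g_deriv_pos z hz
  -- g is strictly monotone, hence positive on (0,1]
  have hgmono : StrictMonoOn g (Icc (0:ℝ) 1) := by
    apply strictMonoOn_of_deriv_pos (convex_Icc 0 1) hsys.g_smooth.continuousOn
    rw [interior_Icc]
    exact hsys.g_deriv_pos
  have hgpos : ∀ z ∈ Ioc (0:ℝ) 1, g z ∈ Ioc (0:ℝ) 1 := by
    intro z hz
    refine ⟨?_, (hsys.g_mem z ⟨hz.1.le, hz.2⟩).2⟩
    have := hgmono (left_mem_Icc.2 zero_le_one) ⟨hz.1.le, hz.2⟩ hz.1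
    rwa [hsys.g_zero] at this
  -- continuity of z ↦ f (g z) e
  have hfcont : ∀ e ∈ Icc (0:ℝ) 1, ContinuousOn (fun z => f (g z) e) (Icc (0:ℝ) 1) := by
    intro e he
    have hmap : ContinuousOn (fun z => ((g z, e) : ℝ × ℝ)) (Icc (0:ℝ) 1) :=
      hsys.g_smooth.continuousOn.prodMk continuousOn_const
    exact hsys.f_smooth.continuousOn.comp hmap (fun z hz => ⟨hsys.g_mem z hz, he⟩)
  -- rewrite singlePotential using the continuous version of the derivative
  have hcong : ∀ e t : ℝ, 0 ≤ t → t ≤ 1 →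
      singlePotential f g t e = ∫ z in (0:ℝ)..t, (z - f (g z) e) * derivWithin g (Icc (0:ℝ) 1) z := by
    intro e t ht0 ht1
    rw [singlePotential]
    apply intervalIntegral.integral_congr_ae
    have h1 : ∀ᵐ z : ℝ, z ≠ (1:ℝ) := by
      rw [ae_iff]
      have : {z : ℝ | ¬ z ≠ 1} = {1} := by ext z; simp
      rw [this]
      exact Real.volume_singleton
    filter_upwards [h1] with z hz hzI
    rw [Set.uIoc_of_le ht0] at hzI
    have hzoo : z ∈ Ioo (0:ℝ) 1 := ⟨hzI.1, lt_of_le_of_ne (hzI.2.trans ht1) hz⟩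
    rw [hGd z hzoo]
  -- positivity of interval integrals of continuous, pointwise-positive functions
  have hpos_int : ∀ (x : ℝ), 0 < x → x ≤ 1 → ∀ (F : ℝ → ℝ), ContinuousOn F (Icc (0:ℝ) 1) →
      (∀ z ∈ Ioo (0:ℝ) x, 0 < F z) → 0 < ∫ z in (0:ℝ)..x, F z := by
    intro x hx0 hx1 F hFc hFp
    apply intervalIntegral.intervalIntegral_pos_of_pos_on
    · apply ContinuousOn.intervalIntegrable
      apply hFc.mono
      rw [Set.uIcc_of_le hx0.le]
      exact Icc_subset_Icc le_rfl hx1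
    · exact hFp
    · exact hx0
  -- fixed-point-free property below uFix
  have hSne : {xt : ℝ | xt ∈ Icc (0:ℝ) 1 ∧ ∀ x : ℝ, 0 < x → x < xt → f (g x) ε' < x}.Nonempty := by
    refine ⟨0, left_mem_Icc.2 zero_le_one, ?_⟩
    intro x h1 h2
    linarith
  have hfp : ∀ z : ℝ, 0 < z → z < uFix f g ε' → f (g z) ε' < z := by
    intro z hz0 hzu
    rw [uFix] at hzu
    obtain ⟨xt, hxt, hzxt⟩ := exists_lt_of_lt_csSup hSne hzu
    exact hxt.2 z hz0 hzxt
  -- main part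
  intro x hx
  obtain ⟨hx0, hx1⟩ := hx
  -- f (g z) ε < f (g z) ε' on (0, x)
  have hflt : ∀ z ∈ Ioo (0:ℝ) x, f (g z) ε < f (g z) ε' := by
    intro z hz
    have hzI : z ∈ Ioc (0:ℝ) 1 := ⟨hz.1, (hz.2.le.trans hx1)⟩
    have hg : g z ∈ Ioc (0:ℝ) 1 := hgpos z hzI
    rcases eq_or_lt_of_le hε with he0 | he0
    · rw [← he0, hsys.f_zero_right (g z) ⟨hg.1.le, hg.2⟩]
      have hε'pos : 0 < ε' := by linarith
      have hmono := hsys.f_mono_eps (g z) hg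
        (show ε'/2 ∈ Ioc (0:ℝ) 1 from ⟨by linarith, by linarith⟩)
        (show ε' ∈ Ioc (0:ℝ) 1 from ⟨hε'pos, hε'1⟩) (by linarith)
      have h0 := (hsys.f_mem (g z) ⟨hg.1.le, hg.2⟩ (ε'/2) ⟨by linarith, by linarith⟩).1
      simp only at hmono
      linarith
    · exact hsys.f_mono_eps (g z) hg ⟨he0, hεI.2⟩ ⟨lt_trans he0 hεε', hε'1⟩ hεε'
  -- integrability
  have hint1 : IntervalIntegrable
      (fun z => (z - f (g z) ε') * derivWithin g (Icc (0:ℝ) 1) z) volume 0 x := by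
    apply ContinuousOn.intervalIntegrable
    apply ((continuousOn_id.sub (hfcont ε' hε'I)).mul hG_cont).mono
    rw [Set.uIcc_of_le hx0.le]
    exact Icc_subset_Icc le_rfl hx1
  have hint2 : IntervalIntegrable
      (fun z => (f (g z) ε' - f (g z) ε) * derivWithin g (Icc (0:ℝ) 1) z) volume 0 x := by
    apply ContinuousOn.intervalIntegrable
    apply (((hfcont ε' hε'I).sub (hfcont ε hεI)).mul hG_cont).mono
    rw [Set.uIcc_of_le hx0.le]
    exact Icc_subset_Icc le_rfl hx1
  -- decomposition
  have hdecomp : singlePotential f g x ε = singlePotential f g x ε' +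
      ∫ z in (0:ℝ)..x, (f (g z) ε' - f (g z) ε) * derivWithin g (Icc (0:ℝ) 1) z := by
    rw [hcong ε x hx0.le hx1, hcong ε' x hx0.le hx1, ← intervalIntegral.integral_add hint1 hint2]
    apply intervalIntegral.integral_congr
    intro z _
    simp only
    ring
  -- difference integral is positive
  have hdiffpos : 0 < ∫ z in (0:ℝ)..x,
      (f (g z) ε' - f (g z) ε) * derivWithin g (Icc (0:ℝ) 1) z := by
    apply hpos_int x hx0 hx1 _ (((hfcont ε' hε'I).sub (hfcont ε hεI)).mul hG_cont)
    intro z hz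
    exact mul_pos (sub_pos.2 (hflt z hz)) (hGpos z ⟨hz.1, lt_of_lt_of_le hz.2 hx1⟩)
  -- U(x; ε') ≥ 0
  have hU' : 0 ≤ singlePotential f g x ε' := by
    rcases le_or_gt x (uFix f g ε') with hxu | hxu
    · apply le_of_lt
      rw [hcong ε' x hx0.le hx1]
      apply hpos_int x hx0 hx1 _ ((continuousOn_id.sub (hfcont ε' hε'I)).mul hG_cont)
      intro z hz
      refine mul_pos ?_ (hGpos z ⟨hz.1, lt_of_lt_of_le hz.2 hx1⟩)
      have := hfp z hz.1 (lt_of_lt_of_le hz.2 hxu)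
      simp only [Pi.sub_apply, id]
      linarith
    · -- x ∈ [u(ε'), 1], use energy gap
      obtain ⟨C, hC⟩ := isCompact_Icc.exists_bound_of_continuousOn
        ((continuousOn_id.sub (hfcont ε' hε'I)).mul hG_cont)
      have hbdd : BddBelow ((fun t => singlePotential f g t ε') '' Icc (uFix f g ε') 1) := by
        refine ⟨-(max C 0), ?_⟩
        rintro y ⟨t, ht, rfl⟩
        have ht' : t ∈ Icc (0:ℝ) 1 := ⟨le_trans hu.le ht.1, ht.2⟩
        show -(max C 0) ≤ singlePotential f g t ε'
        rw [hcong ε' t ht'.1 ht'.2]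
        have hb : ‖∫ z in (0:ℝ)..t, (z - f (g z) ε') * derivWithin g (Icc (0:ℝ) 1) z‖ ≤
            (max C 0) * |t - 0| := by
          apply intervalIntegral.norm_integral_le_of_norm_le_const
          intro z hz
          rw [Set.uIoc_of_le ht'.1] at hz
          exact le_trans (hC z ⟨hz.1.le, hz.2.trans ht'.2⟩) (le_max_left C 0)
        rw [Real.norm_eq_abs, abs_le] at hb
        have habs : |t - 0| ≤ 1 := by
          rw [abs_le]; constructor <;> linarith [ht'.1, ht'.2]
        nlinarith [le_max_right C 0, hb.1]
      have hmem : singlePotential f g x ε' ∈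
          (fun t => singlePotential f g t ε') '' Icc (uFix f g ε') 1 :=
        ⟨x, ⟨hxu.le, hx1⟩, rfl⟩
      have hle : energyGap f g ε' ≤ singlePotential f g x ε' := by
        rw [energyGap]
        exact csInf_le hbdd hmem
      linarith
  linarith
end
end

section
/- Fix w ≥ 1, L ≥ 1, set i₀ = ⌊(w−1)/2⌋ and n = L+3w+i₀+1, and index vectors x ∈ [0,1]^n by positions i = −L−w, …, 2w+i₀. If the first w components of x are zero (x_i = 0 for i < −L) and the last 2w+1 components are all equal to x_{i₀} (x_i = x_{i₀} for i ≥ i₀), then the coupled potential satisfies U(Sx;ε) − U(x;ε) = −U_s(x_{i₀};ε), where U_s is the single-system potential. -/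
open MeasureTheory Set Filter Topology

noncomputable section

/-- `F(x;ε) = ∫₀ˣ f(z;ε) dz`. -/
def Fint (f : ℝ → ℝ → ℝ) (x ε : ℝ) : ℝ := ∫ z in (0:ℝ)..x, f z ε

/-- `G(x) = ∫₀ˣ g(z) dz`. -/
def Gint (g : ℝ → ℝ) (x : ℝ) : ℝ := ∫ z in (0:ℝ)..x, g z

/-- The `n × n` coupling matrix `A` with `[A]_{ij} = 1/w` for `i ≤ j ≤ i+w−1`, else `0`. -/
def Amat (n w : ℕ) : Matrix (Fin n) (Fin n) ℝ :=
  fun i j => if (i:ℕ) ≤ (j:ℕ) ∧ (j:ℕ) < (i:ℕ) + w then (1 / (w:ℝ)) else 0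

/-- The coupled potential `U(x;ε) = g(x)ᵀx − Σᵢ G(xᵢ) − Σᵢ F([A g(x)]ᵢ; ε)`. -/
def coupledPotential (f : ℝ → ℝ → ℝ) (g : ℝ → ℝ) (n w : ℕ) (x : Fin n → ℝ) (ε : ℝ) : ℝ :=
  (∑ i, g (x i) * x i) - (∑ i, Gint g (x i)) -
    ∑ i, Fint f ((Amat n w).mulVec (fun j => g (x j)) i) ε

/-- The shift operator `S`: `[Sx]₁ = 0` and `[Sx]_i = x_{i−1}` for `i ≥ 2`. -/
def shiftVec {n : ℕ} (x : Fin n → ℝ) : Fin n → ℝ :=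
  fun i => if _ : (i:ℕ) = 0 then 0
    else x ⟨(i:ℕ) - 1, lt_of_le_of_lt (Nat.sub_le _ _) i.isLt⟩

lemma single_eval {f : ℝ → ℝ → ℝ} {g : ℝ → ℝ} (hsys : ScalarAdmissible f g)
    {ε : ℝ} (hε : ε ∈ Icc (0:ℝ) 1) {c : ℝ} (hc : c ∈ Icc (0:ℝ) 1) :
    singlePotential f g c ε = c * g c - Gint g c - Fint f (g c) ε := by
  have h2 : (1:WithTop ℕ∞) ≤ 2 := by norm_num
  have gcont : ContinuousOn g (Icc 0 1) := hsys.g_smooth.continuousOn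
  set D : ℝ → ℝ := derivWithin g (Icc 0 1) with hD
  have Dcont : ContinuousOn D (Icc 0 1) :=
    hsys.g_smooth.continuousOn_derivWithin (uniqueDiffOn_Icc one_pos) h2
  have fcont : ContinuousOn (fun u => f u ε) (Icc (0:ℝ) 1) := by
    have h := hsys.f_smooth.continuousOn
    exact h.comp ((continuous_id.prodMk continuous_const).continuousOn)
      (fun u hu => Set.mem_prod.mpr ⟨hu, hε⟩)
  have gmono : StrictMonoOn g (Icc (0:ℝ) 1) := by
    apply strictMonoOn_of_deriv_pos (convex_Icc 0 1) gcont
    intro z hz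
    rw [interior_Icc] at hz
    exact hsys.g_deriv_pos z hz
  have gmem : ∀ z ∈ Icc (0:ℝ) 1, g z ∈ Icc (0:ℝ) 1 := hsys.g_mem
  have gIoo : ∀ z ∈ Ioo (0:ℝ) 1, g z ∈ Ioo (0:ℝ) 1 := by
    intro z hz
    constructor
    · rw [← hsys.g_zero]
      exact gmono (left_mem_Icc.2 one_pos.le) ⟨hz.1.le, hz.2.le⟩ hz.1
    · have h1 : g z < g 1 := gmono ⟨hz.1.le, hz.2.le⟩ (right_mem_Icc.2 one_pos.le) hz.2
      exact lt_of_lt_of_le h1 (gmem 1 (right_mem_Icc.2 one_pos.le)).2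
  have hgd : ∀ z ∈ Ioo (0:ℝ) 1, HasDerivAt g (D z) z := by
    intro z hz
    have h1 : DifferentiableWithinAt ℝ g (Icc 0 1) z :=
      hsys.g_smooth.differentiableOn (by norm_num) z (mem_of_mem_nhds (Icc_mem_nhds hz.1 hz.2))
    exact h1.hasDerivWithinAt.hasDerivAt (Icc_mem_nhds hz.1 hz.2)
  set H : ℝ → ℝ := fun z => z * g z - Gint g z - Fint f (g z) ε with hH
  set φ : ℝ → ℝ := fun z => (z - f (g z) ε) * D z with hφ
  have hsub : Icc (0:ℝ) c ⊆ Icc (0:ℝ) 1 := Icc_subset_Icc le_rfl hc.2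
  have maps : ∀ z ∈ Icc (0:ℝ) c, g z ∈ Icc (0:ℝ) 1 := fun z hz => gmem z (hsub hz)
  have hGc : ContinuousOn (Gint g) (Icc (0:ℝ) 1) := by
    have hint : IntegrableOn g (uIcc (0:ℝ) 1) := by
      rw [uIcc_of_le zero_le_one]; exact gcont.integrableOn_Icc
    have := intervalIntegral.continuousOn_primitive_interval hint
    rwa [uIcc_of_le zero_le_one] at this
  have hFc : ContinuousOn (fun u => Fint f u ε) (Icc (0:ℝ) 1) := by
    have hint : IntegrableOn (fun u => f u ε) (uIcc (0:ℝ) 1) := by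
      rw [uIcc_of_le zero_le_one]; exact fcont.integrableOn_Icc
    have := intervalIntegral.continuousOn_primitive_interval hint
    rwa [uIcc_of_le zero_le_one] at this
  have Hcont : ContinuousOn H (Icc 0 c) := by
    refine ContinuousOn.sub (ContinuousOn.sub ?_ (hGc.mono hsub)) ?_
    · exact continuousOn_id.mul (gcont.mono hsub)
    · exact hFc.comp (gcont.mono hsub) maps
  have Hderiv : ∀ z ∈ Ioo 0 c, HasDerivAt H (φ z) z := by
    intro z hz
    have hz1 : z ∈ Ioo (0:ℝ) 1 := ⟨hz.1, lt_of_lt_of_le hz.2 hc.2⟩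
    have hgz : g z ∈ Ioo (0:ℝ) 1 := gIoo z hz1
    have hgder := hgd z hz1
    have hid : HasDerivAt (fun t => t * g t) (1 * g z + z * D z) z :=
      (hasDerivAt_id z).mul hgder
    have hGder : HasDerivAt (Gint g) (g z) z := by
      have hii : IntervalIntegrable g volume 0 z := by
        apply ContinuousOn.intervalIntegrable
        apply gcont.mono
        rw [uIcc_of_le hz1.1.le]
        exact Icc_subset_Icc le_rfl hz1.2.le
      exact intervalIntegral.integral_hasDerivAt_right hii
        ((gcont.mono Ioo_subset_Icc_self).stronglyMeasurableAtFilter isOpen_Ioo z hz1)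
        (gcont.continuousAt (Icc_mem_nhds hz1.1 hz1.2))
    have hFder : HasDerivAt (fun u => Fint f u ε) (f (g z) ε) (g z) := by
      have hii : IntervalIntegrable (fun u => f u ε) volume 0 (g z) := by
        apply ContinuousOn.intervalIntegrable
        apply fcont.mono
        rw [uIcc_of_le hgz.1.le]
        exact Icc_subset_Icc le_rfl hgz.2.le
      exact intervalIntegral.integral_hasDerivAt_right hii
        ((fcont.mono Ioo_subset_Icc_self).stronglyMeasurableAtFilter isOpen_Ioo _ hgz)
        (fcont.continuousAt (Icc_mem_nhds hgz.1 hgz.2))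
    have hcomp : HasDerivAt (fun t => Fint f (g t) ε) (f (g z) ε * D z) z :=
      HasDerivAt.comp z hFder hgder
    have := (hid.sub hGder).sub hcomp
    refine HasDerivAt.congr_deriv this ?_
    simp only [hφ]
    ring
  have φcont : ContinuousOn φ (Icc 0 c) := by
    refine ContinuousOn.mul (ContinuousOn.sub continuousOn_id ?_) (Dcont.mono hsub)
    exact fcont.comp (gcont.mono hsub) maps
  have φint : IntervalIntegrable φ volume 0 c := by
    apply ContinuousOn.intervalIntegrable
    rwa [uIcc_of_le hc.1]
  have key : ∫ z in (0:ℝ)..c, φ z = H c - H 0 :=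
    intervalIntegral.integral_eq_sub_of_hasDerivAt_of_le hc.1 Hcont Hderiv φint
  have H0 : H 0 = 0 := by
    simp [hH, Gint, Fint, hsys.g_zero, intervalIntegral.integral_same]
  have hcongr : singlePotential f g c ε = ∫ z in (0:ℝ)..c, φ z := by
    apply intervalIntegral.integral_congr_ae
    have hne : ∀ᵐ z : ℝ, z ≠ c := by
      refine eventually_of_mem (U := {c}ᶜ) ?_ (fun z hz => hz)
      rw [mem_ae_iff, compl_compl]
      exact measure_singleton c
    filter_upwards [hne] with z hz hz2
    rw [uIoc_of_le hc.1] at hz2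
    have hzo : z ∈ Ioo (0:ℝ) 1 := ⟨hz2.1, lt_of_lt_of_le (lt_of_le_of_ne hz2.2 hz) hc.2⟩
    have hdw : D z = deriv g z := derivWithin_of_mem_nhds (Icc_mem_nhds hzo.1 hzo.2)
    simp only [hφ, hdw]
  rw [hcongr, key, H0, sub_zero]

def extVec {n : ℕ} (x : Fin n → ℝ) : ℕ → ℝ := fun k => if h : k < n then x ⟨k, h⟩ else 0

def avgv (g : ℝ → ℝ) (n w : ℕ) (v : ℕ → ℝ) (i : ℕ) : ℝ :=
  ∑ j ∈ Finset.range n, (if i ≤ j ∧ j < i + w then (1/(w:ℝ)) else 0) * g (v j)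

lemma avg_eq (g : ℝ → ℝ) (n w : ℕ) (v : ℕ → ℝ) (i : ℕ) (hi : i < n) :
    avgv g n w v i = (1/(w:ℝ)) * ((∑ j ∈ Finset.range (min (i+w) n), g (v j))
      - ∑ j ∈ Finset.range i, g (v j)) := by
  unfold avgv
  simp only [ite_mul, zero_mul]
  rw [← Finset.sum_filter]
  have hfil : (Finset.range n).filter (fun j => i ≤ j ∧ j < i + w)
      = Finset.Ico i (min (i+w) n) := by
    ext j
    simp only [Finset.mem_filter, Finset.mem_range, Finset.mem_Ico, lt_min_iff]
    omega
  rw [hfil, ← Finset.mul_sum, Finset.sum_Ico_eq_sub _ (by omega : i ≤ min (i+w) n)]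

lemma shift_sum (m : ℕ) (u v : ℕ → ℝ) (h0 : v 0 = 0)
    (hs : ∀ k, k < m → v (k+1) = u k) (φ : ℝ → ℝ) (hφ : φ 0 = 0) :
    (∑ k ∈ Finset.range (m+1), φ (v k)) - ∑ k ∈ Finset.range (m+1), φ (u k)
      = -(φ (u m)) := by
  rw [Finset.sum_range_succ' (fun k => φ (v k)), Finset.sum_range_succ,
    Finset.sum_congr rfl (fun k hk => by rw [hs k (Finset.mem_range.mp hk)]), h0, hφ]
  ring

lemma T3_diff (p w : ℕ) (hw : 1 ≤ w) (A B : ℕ → ℝ) (ψ : ℕ → ℝ)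
    (hB0 : B 0 = 0)
    (hmid : ∀ k, k < p → B (k+1) = A k)
    (htop : ∀ k, k < w - 1 → B (p + k + 1) - A (p + k) = ψ (k+1) - ψ k)
    (hlast : A (p + w - 1) = ψ (w-1)) :
    (∑ k ∈ Finset.range (p+w), B k) - ∑ k ∈ Finset.range (p+w), A k = -(ψ 0) := by
  obtain ⟨q, rfl⟩ : ∃ q, w = q + 1 := ⟨w-1, by omega⟩
  have hq : ∀ k, k < q → B (p + k + 1) - A (p + k) = ψ (k+1) - ψ k := by
    intro k hk; exact htop k (by omega)
  have e : p + (q + 1) = (p + q) + 1 := by omega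
  rw [e, Finset.sum_range_succ' (fun k => B k), Finset.sum_range_succ,
    Finset.sum_range_add, Finset.sum_range_add]
  have h1 : ∑ k ∈ Finset.range p, B (k+1) = ∑ k ∈ Finset.range p, A k :=
    Finset.sum_congr rfl (fun k hk => hmid k (Finset.mem_range.mp hk))
  have h2 : ∑ k ∈ Finset.range q, B (p + k + 1)
      = (∑ k ∈ Finset.range q, A (p + k)) + (ψ q - ψ 0) := by
    rw [← Finset.sum_range_sub ψ q, ← Finset.sum_add_distrib]
    refine Finset.sum_congr rfl (fun k hk => ?_)
    have := hq k (Finset.mem_range.mp hk)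
    linarith
  have h3 : A (p + q) = ψ q := by
    have : p + (q+1) - 1 = p + q := by omega
    rw [← this, hlast]
    norm_num
  rw [h1, h2, h3, hB0]
  try ring


/-- Shifting a one-sided fixed-point-shaped vector changes the coupled potential by
`U(Sx;ε) − U(x;ε) = −U_s(x_{i₀};ε)`: here `i₀ = ⌊(w−1)/2⌋`, positions `−L−w,…,2w+i₀`
are re-indexed as `Fin n` with `n = L+3w+i₀+1`, the first `w` components of `x` vanish
and the last `2w+1` components all equal `x_{i₀}` (the component at `Fin`-index `L+w+i₀`). -/
theorem coupled_potential_shift (f : ℝ → ℝ → ℝ) (g : ℝ → ℝ) (hsys : ScalarAdmissible f g)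
    (w L : ℕ) (hw : 1 ≤ w) (hL : 1 ≤ L) (n : ℕ) (hn : n = L + 3 * w + (w - 1) / 2 + 1)
    (ε : ℝ) (hε : ε ∈ Icc (0:ℝ) 1)
    (x : Fin n → ℝ) (hmem : ∀ i, x i ∈ Icc (0:ℝ) 1)
    (hleft : ∀ i : Fin n, (i:ℕ) < w → x i = 0)
    (hright : ∀ i : Fin n, L + w + (w - 1) / 2 ≤ (i:ℕ) →
      x i = x ⟨L + w + (w - 1) / 2, by omega⟩) :
    coupledPotential f g n w (shiftVec x) ε - coupledPotential f g n w x ε =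
      -(singlePotential f g (x ⟨L + w + (w - 1) / 2, by omega⟩) ε) := by
  have g0 := hsys.g_zero
  have ht0 : L + w + (w - 1) / 2 < n := by omega
  set t0 := L + w + (w - 1) / 2 with ht0def
  set c := x ⟨t0, ht0⟩ with hcdef
  have hcmem : c ∈ Icc (0:ℝ) 1 := hmem _
  set X := extVec x with hXdef
  set SX := extVec (shiftVec x) with hSXdef
  -- pointwise facts
  have hval : ∀ (v : Fin n → ℝ) (i : Fin n), extVec v (i : ℕ) = v i := by
    intro v i
    simp [extVec, i.isLt]
  have hXval : ∀ (k : ℕ) (h : k < n), X k = x ⟨k, h⟩ := fun k h => dif_pos h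
  have hX0 : ∀ k, k < w → X k = 0 := by
    intro k hk
    rw [hXval k (by omega)]
    exact hleft _ hk
  have hXc : ∀ k, t0 ≤ k → ∀ (h : k < n), X k = c := by
    intro k hk h
    rw [hXval k h, hcdef]
    exact hright ⟨k, h⟩ hk
  have hSX0 : SX 0 = 0 := by
    have h0 : (0:ℕ) < n := by omega
    rw [hSXdef]
    show extVec (shiftVec x) 0 = 0
    rw [extVec]
    simp [h0, shiftVec]
  have hSXs : ∀ k, k + 1 < n → SX (k+1) = X k := by
    intro k hk
    rw [hSXdef, hXdef]
    show extVec (shiftVec x) (k+1) = extVec x k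
    rw [extVec, extVec]
    simp only [hk, dif_pos, (by omega : k < n)]
    simp [shiftVec]
  -- partial sum facts
  have hQP : ∀ m : ℕ, m + 1 ≤ n →
      ∑ j ∈ Finset.range (m+1), g (SX j) = ∑ j ∈ Finset.range m, g (X j) := by
    intro m hm
    rw [Finset.sum_range_succ' (fun j => g (SX j)), hSX0, g0, add_zero]
    refine Finset.sum_congr rfl (fun k hk => ?_)
    rw [hSXs k (by have := Finset.mem_range.mp hk; omega)]
  have htail : ∀ a b : ℕ, t0 ≤ a → a ≤ b → b ≤ n →
      (∑ j ∈ Finset.range b, g (X j)) - ∑ j ∈ Finset.range a, g (X j)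
        = ((b - a : ℕ):ℝ) * g c := by
    intro a b h1 h2 h3
    have hconst : ∀ j ∈ Finset.Ico a b, g (X j) = g c := by
      intro j hj
      have hj' := Finset.mem_Ico.mp hj
      rw [hXc j (by omega) (by omega)]
    rw [← Finset.sum_Ico_eq_sub _ h2, Finset.sum_congr rfl hconst, Finset.sum_const,
      Nat.card_Ico, nsmul_eq_mul]
  have hpre : ∀ m, m ≤ w → ∑ j ∈ Finset.range m, g (X j) = 0 := by
    intro m hm
    apply Finset.sum_eq_zero
    intro j hj
    have := Finset.mem_range.mp hj
    rw [hX0 j (by omega), g0]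
  -- avg values
  have havX_k : ∀ k, k < w → avgv g n w X (n - w + k) = (((w - k:ℕ):ℝ)/(w:ℝ)) * g c := by
    intro k hk
    rw [avg_eq g n w X _ (by omega)]
    have hmin : min (n - w + k + w) n = n := by omega
    rw [hmin, htail (n - w + k) n (by omega) (by omega) le_rfl]
    have e : n - (n - w + k) = w - k := by omega
    rw [e]
    ring
  have havS0 : avgv g n w SX 0 = 0 := by
    rw [avg_eq g n w SX 0 (by omega)]
    have hmin : min (0 + w) n = w := by omega
    rw [hmin]
    have hsum0 : ∑ j ∈ Finset.range w, g (SX j) = 0 := by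
      have hw' : w = (w - 1) + 1 := by omega
      rw [hw', hQP (w-1) (by omega), hpre (w-1) (by omega)]
    rw [hsum0]
    simp
  have havS_mid : ∀ k, k + 1 + w ≤ n → avgv g n w SX (k+1) = avgv g n w X k := by
    intro k h2
    rw [avg_eq g n w SX (k+1) (by omega), avg_eq g n w X k (by omega)]
    have hm1 : min (k + 1 + w) n = k + 1 + w := by omega
    have hm2 : min (k + w) n = k + w := by omega
    have e1 : k + 1 + w = (k + w) + 1 := by omega
    rw [hm1, hm2, e1, hQP (k + w) (by omega), hQP k (by omega)]
  have havS_top : ∀ m, n - w + 1 ≤ m → m < n →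
      avgv g n w SX m = (((n - m:ℕ):ℝ)/(w:ℝ)) * g c := by
    intro m h1 h2
    rw [avg_eq g n w SX m h2]
    have hmin : min (m + w) n = n := by omega
    rw [hmin]
    have q1 : ∑ j ∈ Finset.range n, g (SX j) = ∑ j ∈ Finset.range (n-1), g (X j) := by
      obtain ⟨m', hm'⟩ : ∃ m', n = m' + 1 := ⟨n-1, by omega⟩
      rw [hm']
      simp only [Nat.add_sub_cancel]
      exact hQP m' (by omega)
    have q2 : ∑ j ∈ Finset.range m, g (SX j) = ∑ j ∈ Finset.range (m-1), g (X j) := by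
      obtain ⟨m', hm'⟩ : ∃ m', m = m' + 1 := ⟨m-1, by omega⟩
      rw [hm']
      simp only [Nat.add_sub_cancel]
      exact hQP m' (by omega)
    rw [q1, q2, htail (m-1) (n-1) (by omega) (by omega) (by omega)]
    have e : (n - 1) - (m - 1) = n - m := by omega
    rw [e]
    ring
  -- convert Fin sums to range sums
  have hmv : ∀ (v : Fin n → ℝ) (i : Fin n),
      (Amat n w).mulVec (fun j => g (v j)) i = avgv g n w (extVec v) (i : ℕ) := by
    intro v i
    simp only [Matrix.mulVec, dotProduct, Amat, avgv]
    rw [← Fin.sum_univ_eq_sum_range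
      (fun j => (if (i:ℕ) ≤ j ∧ j < (i:ℕ) + w then (1/(w:ℝ)) else 0) * g (extVec v j)) n]
    refine Finset.sum_congr rfl (fun j _ => ?_)
    rw [hval v j]
  -- the three differences
  have hd1 : (∑ i : Fin n, g (shiftVec x i) * shiftVec x i)
      - (∑ i : Fin n, g (x i) * x i) = -(g c * c) := by
    have e1 : (∑ i : Fin n, g (shiftVec x i) * shiftVec x i)
        = ∑ k ∈ Finset.range n, g (SX k) * SX k := by
      rw [← Fin.sum_univ_eq_sum_range (fun k => g (SX k) * SX k) n]
      exact Finset.sum_congr rfl (fun i _ => by rw [hSXdef, hval])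
    have e2 : (∑ i : Fin n, g (x i) * x i) = ∑ k ∈ Finset.range n, g (X k) * X k := by
      rw [← Fin.sum_univ_eq_sum_range (fun k => g (X k) * X k) n]
      exact Finset.sum_congr rfl (fun i _ => by rw [hXdef, hval])
    rw [e1, e2]
    have := shift_sum (n-1) X SX hSX0 (fun k hk => hSXs k (by omega))
      (fun y => g y * y) (by simp [g0])
    rw [show (n-1)+1 = n from by omega, hXc (n-1) (by omega) (by omega)] at this
    exact this
  have hd2 : (∑ i : Fin n, Gint g (shiftVec x i)) - (∑ i : Fin n, Gint g (x i))
      = -(Gint g c) := by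
    have e1 : (∑ i : Fin n, Gint g (shiftVec x i)) = ∑ k ∈ Finset.range n, Gint g (SX k) := by
      rw [← Fin.sum_univ_eq_sum_range (fun k => Gint g (SX k)) n]
      exact Finset.sum_congr rfl (fun i _ => by rw [hSXdef, hval])
    have e2 : (∑ i : Fin n, Gint g (x i)) = ∑ k ∈ Finset.range n, Gint g (X k) := by
      rw [← Fin.sum_univ_eq_sum_range (fun k => Gint g (X k)) n]
      exact Finset.sum_congr rfl (fun i _ => by rw [hXdef, hval])
    rw [e1, e2]
    have := shift_sum (n-1) X SX hSX0 (fun k hk => hSXs k (by omega))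
      (Gint g) (by simp [Gint])
    rw [show (n-1)+1 = n from by omega, hXc (n-1) (by omega) (by omega)] at this
    exact this
  have hwcast : (w:ℝ) ≠ 0 := by positivity
  have hd3 : (∑ i : Fin n, Fint f ((Amat n w).mulVec (fun j => g (shiftVec x j)) i) ε)
      - (∑ i : Fin n, Fint f ((Amat n w).mulVec (fun j => g (x j)) i) ε)
      = -(Fint f (g c) ε) := by
    have e1 : (∑ i : Fin n, Fint f ((Amat n w).mulVec (fun j => g (shiftVec x j)) i) ε)
        = ∑ k ∈ Finset.range n, Fint f (avgv g n w SX k) ε := by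
      rw [← Fin.sum_univ_eq_sum_range (fun k => Fint f (avgv g n w SX k) ε) n]
      exact Finset.sum_congr rfl (fun i _ => by rw [hmv (shiftVec x) i, ← hSXdef])
    have e2 : (∑ i : Fin n, Fint f ((Amat n w).mulVec (fun j => g (x j)) i) ε)
        = ∑ k ∈ Finset.range n, Fint f (avgv g n w X k) ε := by
      rw [← Fin.sum_univ_eq_sum_range (fun k => Fint f (avgv g n w X k) ε) n]
      exact Finset.sum_congr rfl (fun i _ => by rw [hmv x i, ← hXdef])
    rw [e1, e2]
    have hT := T3_diff (n - w) w hw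
      (fun k => Fint f (avgv g n w X k) ε)
      (fun k => Fint f (avgv g n w SX k) ε)
      (fun k => Fint f (((w:ℝ) - (k:ℕ))/(w:ℝ) * g c) ε)
      (by show Fint f (avgv g n w SX 0) ε = 0
          rw [havS0]; simp [Fint])
      (by intro k hk
          show Fint f (avgv g n w SX (k+1)) ε = Fint f (avgv g n w X k) ε
          rw [havS_mid k (by omega)])
      (by intro k hk
          show Fint f (avgv g n w SX (n - w + k + 1)) ε
              - Fint f (avgv g n w X (n - w + k)) ε = _
          rw [havS_top (n - w + k + 1) (by omega) (by omega), havX_k k (by omega)]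
          have e1 : ((n - (n - w + k + 1) : ℕ):ℝ) = (w:ℝ) - ((k:ℝ)+1) := by
            have e : n - (n - w + k + 1) = w - (k+1) := by omega
            rw [e, Nat.cast_sub (by omega : k + 1 ≤ w)]
            push_cast
            ring
          have e2 : ((w - k : ℕ):ℝ) = (w:ℝ) - (k:ℝ) := by
            rw [Nat.cast_sub (by omega : k ≤ w)]
          rw [e1, e2]
          push_cast
          ring_nf)
      (by show Fint f (avgv g n w X (n - w + w - 1)) ε = _
          have e : n - w + w - 1 = n - w + (w-1) := by omega
          rw [e, havX_k (w-1) (by omega)]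
          have e2 : ((w - (w-1) : ℕ):ℝ) = (w:ℝ) - ((w-1:ℕ):ℝ) := by
            rw [Nat.cast_sub (by omega : w - 1 ≤ w)]
          rw [e2])
    rw [show n - w + w = n from by omega] at hT
    beta_reduce at hT
    rw [hT]
    have : ((w:ℝ) - ((0:ℕ):ℝ))/(w:ℝ) * g c = g c := by
      field_simp; simp
    rw [this]
  -- finish
  have hsp : singlePotential f g c ε = c * g c - Gint g c - Fint f (g c) ε :=
    single_eval hsys hε hcmem
  show coupledPotential f g n w (shiftVec x) ε - coupledPotential f g n w x ε
      = -(singlePotential f g c ε)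
  unfold coupledPotential
  rw [hsp]
  linarith [hd1, hd2, hd3]
end
end

section
/- For a scalar admissible system (f,g), the Hessian of the coupled potential satisfies ‖U''(x;ε)‖_∞ ≤ K_{f,g} for all x ∈ [0,1]^n and ε ∈ [0,1], where ‖·‖_∞ on matrices is the maximum absolute row sum; in particular the bound K_{f,g} is independent of n, L and w. -/
open MeasureTheory Set Filter Topology Matrix

noncomputable section

/-- The `(i,j)` entry of the Hessian of the coupled potential `x ↦ U(x;ε)`:
the second derivative taken along the coordinate directions `e_i` and `e_j`. -/
def hessEntry (f : ℝ → ℝ → ℝ) (g : ℝ → ℝ) (n w : ℕ) (x : Fin n → ℝ) (ε : ℝ)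
    (i j : Fin n) : ℝ :=
  fderiv ℝ (fun y : Fin n → ℝ =>
      fderiv ℝ (fun z : Fin n → ℝ => coupledPotential f g n w z ε) y (Pi.single i 1))
    x (Pi.single j 1)

/-- `K_{f,g} = ‖g'‖_∞ + ‖g'‖_∞² ‖f'‖_∞ + ‖g''‖_∞`, with sup-norms over the unit interval
(and over `ε ∈ [0,1]` as well for `∂f/∂x`). -/
def Kfg (f : ℝ → ℝ → ℝ) (g : ℝ → ℝ) : ℝ :=
  sSup ((fun x => |deriv g x|) '' Icc (0:ℝ) 1) +
    (sSup ((fun x => |deriv g x|) '' Icc (0:ℝ) 1)) ^ 2 *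
      sSup ((fun p : ℝ × ℝ => |deriv (fun z => f z p.2) p.1|) '' (Icc (0:ℝ) 1 ×ˢ Icc (0:ℝ) 1)) +
    sSup ((fun x => |deriv (deriv g) x|) '' Icc (0:ℝ) 1)

/-! ### Auxiliary lemmas -/

section Aux

local notation "I01" => Icc (0:ℝ) 1

lemma udo : UniqueDiffOn ℝ (Icc (0:ℝ) 1) := uniqueDiffOn_Icc zero_lt_one

lemma Amat_nonneg (n w : ℕ) (k j : Fin n) : 0 ≤ Amat n w k j := by
  unfold Amat; split <;> positivity

lemma Amat_diag_pos (n w : ℕ) (hw : 1 ≤ w) (k : Fin n) : 0 < Amat n w k k := by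
  unfold Amat
  rw [if_pos ⟨le_rfl, by omega⟩]
  positivity

lemma Amat_row_sum_le (n w : ℕ) (hw : 1 ≤ w) (k : Fin n) : ∑ j, Amat n w k j ≤ 1 := by
  classical
  have h1 : ∑ j, Amat n w k j
      = ((Finset.univ.filter (fun j : Fin n => (k:ℕ) ≤ (j:ℕ) ∧ (j:ℕ) < (k:ℕ) + w)).card : ℝ) * (1 / w) := by
    rw [Finset.card_eq_sum_ones, Nat.cast_sum, Finset.sum_mul, Finset.sum_filter]
    unfold Amat
    refine Finset.sum_congr rfl fun j _ => ?_
    split <;> simp_all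
  have hcard : (Finset.univ.filter (fun j : Fin n => (k:ℕ) ≤ (j:ℕ) ∧ (j:ℕ) < (k:ℕ) + w)).card ≤ w := by
    have := Finset.card_le_card_of_injOn
      (s := Finset.univ.filter (fun j : Fin n => (k:ℕ) ≤ (j:ℕ) ∧ (j:ℕ) < (k:ℕ) + w))
      (f := fun j : Fin n => (j:ℕ))
      (t := Finset.Ico (k:ℕ) ((k:ℕ) + w))
      (fun j hj => by
        have hj' := (Finset.mem_filter.mp hj).2
        exact Finset.mem_Ico.mpr ⟨hj'.1, hj'.2⟩)
      (fun a _ b _ h => Fin.val_injective h)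
    exact le_trans this (by rw [Nat.card_Ico]; omega)
  rw [h1]
  have hw0 : (0:ℝ) < w := by positivity
  calc ((Finset.univ.filter _).card : ℝ) * (1 / w) ≤ (w:ℝ) * (1 / w) := by
        apply mul_le_mul_of_nonneg_right _ (by positivity)
        exact_mod_cast hcard
    _ = 1 := by field_simp

lemma Amat_col_sum_le (n w : ℕ) (hw : 1 ≤ w) (i : Fin n) : ∑ k, Amat n w k i ≤ 1 := by
  classical
  have h1 : ∑ k, Amat n w k i
      = ((Finset.univ.filter (fun k : Fin n => (k:ℕ) ≤ (i:ℕ) ∧ (i:ℕ) < (k:ℕ) + w)).card : ℝ) * (1 / w) := by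
    rw [Finset.card_eq_sum_ones, Nat.cast_sum, Finset.sum_mul, Finset.sum_filter]
    unfold Amat
    refine Finset.sum_congr rfl fun j _ => ?_
    split <;> simp_all
  have hcard : (Finset.univ.filter (fun k : Fin n => (k:ℕ) ≤ (i:ℕ) ∧ (i:ℕ) < (k:ℕ) + w)).card ≤ w := by
    have := Finset.card_le_card_of_injOn
      (s := Finset.univ.filter (fun k : Fin n => (k:ℕ) ≤ (i:ℕ) ∧ (i:ℕ) < (k:ℕ) + w))
      (f := fun k : Fin n => (k:ℕ) + w)
      (t := Finset.Ioc (i:ℕ) ((i:ℕ) + w))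
      (fun k hk => by
        have hk' := (Finset.mem_filter.mp hk).2
        simp only [Finset.coe_Ioc, Set.mem_Ioc, Finset.mem_Ioc]
        omega)
      (fun a _ b _ h => by
        simp only at h
        exact Fin.val_injective (by omega))
    exact le_trans this (by rw [Nat.card_Ioc]; omega)
  rw [h1]
  have hw0 : (0:ℝ) < w := by positivity
  calc ((Finset.univ.filter _).card : ℝ) * (1 / w) ≤ (w:ℝ) * (1 / w) := by
        apply mul_le_mul_of_nonneg_right _ (by positivity)
        exact_mod_cast hcard
    _ = 1 := by field_simp

lemma Amat_mulVec_apply (n w : ℕ) (v : Fin n → ℝ) (k : Fin n) :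
    (Amat n w).mulVec v k = ∑ j, Amat n w k j * v j := by
  simp [Matrix.mulVec, dotProduct]

lemma weighted_sum_mem (n w : ℕ) (hw : 1 ≤ w) (v : Fin n → ℝ)
    (hv : ∀ j, v j ∈ Icc (0:ℝ) 1) (k : Fin n) :
    ∑ j, Amat n w k j * v j ∈ Icc (0:ℝ) 1 := by
  constructor
  · exact Finset.sum_nonneg fun j _ => mul_nonneg (Amat_nonneg n w k j) (hv j).1
  · calc ∑ j, Amat n w k j * v j ≤ ∑ j, Amat n w k j := by
          refine Finset.sum_le_sum fun j _ => ?_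
          nlinarith [(hv j).1, (hv j).2, Amat_nonneg n w k j]
      _ ≤ 1 := Amat_row_sum_le n w hw k

end Aux

section Aux2
variable {f : ℝ → ℝ → ℝ} {g : ℝ → ℝ}

lemma g_strictMono (hsys : ScalarAdmissible f g) : StrictMonoOn g (Icc (0:ℝ) 1) :=
  strictMonoOn_of_deriv_pos (convex_Icc 0 1) hsys.g_smooth.continuousOn
    (by rw [interior_Icc]; exact hsys.g_deriv_pos)

lemma g_pos (hsys : ScalarAdmissible f g) {t : ℝ} (ht : t ∈ Ioo (0:ℝ) 1) : 0 < g t := by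
  have h := g_strictMono hsys (left_mem_Icc.mpr zero_le_one) (Ioo_subset_Icc_self ht) ht.1
  rw [hsys.g_zero] at h; exact h

lemma g_lt_one (hsys : ScalarAdmissible f g) {t : ℝ} (ht : t ∈ Ico (0:ℝ) 1) : g t < 1 := by
  have h1 : g t < g 1 :=
    g_strictMono hsys ⟨ht.1, le_of_lt ht.2⟩ (right_mem_Icc.mpr zero_le_one) ht.2
  have h2 := (hsys.g_mem 1 (right_mem_Icc.mpr zero_le_one)).2
  linarith

lemma g_diffOn (hsys : ScalarAdmissible f g) : DifferentiableOn ℝ g (Icc (0:ℝ) 1) :=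
  hsys.g_smooth.differentiableOn two_ne_zero

lemma dg_contDiffOn (hsys : ScalarAdmissible f g) :
    ContDiffOn ℝ 1 (derivWithin g (Icc (0:ℝ) 1)) (Icc (0:ℝ) 1) :=
  hsys.g_smooth.derivWithin udo (by norm_num)

lemma g_diffAt (hsys : ScalarAdmissible f g) {t : ℝ} (ht : t ∈ Ioo (0:ℝ) 1) :
    DifferentiableAt ℝ g t :=
  (g_diffOn hsys t (Ioo_subset_Icc_self ht)).differentiableAt (Icc_mem_nhds ht.1 ht.2)

lemma deriv_g_eq (hsys : ScalarAdmissible f g) {t : ℝ} (ht : t ∈ Ioo (0:ℝ) 1) :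
    deriv g t = derivWithin g (Icc (0:ℝ) 1) t :=
  (derivWithin_of_mem_nhds (Icc_mem_nhds ht.1 ht.2)).symm

lemma fe_contDiffOn (hsys : ScalarAdmissible f g) {ε : ℝ} (hε : ε ∈ Icc (0:ℝ) 1) :
    ContDiffOn ℝ 2 (fun z => f z ε) (Icc (0:ℝ) 1) := by
  have h : (fun z => f z ε) = (fun p : ℝ × ℝ => f p.1 p.2) ∘ (fun z => (z, ε)) := rfl
  rw [h]
  exact hsys.f_smooth.comp ((contDiff_id.prodMk contDiff_const).contDiffOn)
    (fun z hz => Set.mk_mem_prod hz hε)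

lemma le_sSup_of_interior {u : ℝ → ℝ} (hu : ContinuousOn u (Icc (0:ℝ) 1)) {S : Set ℝ}
    (hS : BddAbove S) (hmem : ∀ t ∈ Ioo (0:ℝ) 1, u t ∈ S) :
    ∀ t ∈ Icc (0:ℝ) 1, u t ≤ sSup S := by
  intro t ht
  have hne : (𝓝[Ioo (0:ℝ) 1] t).NeBot := by
    apply mem_closure_iff_nhdsWithin_neBot.mp
    rw [closure_Ioo one_ne_zero.symm]
    exact ht
  have htend : Tendsto u (𝓝[Ioo (0:ℝ) 1] t) (𝓝 (u t)) := (hu t ht).mono Ioo_subset_Icc_self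
  exact le_of_tendsto htend (eventually_nhdsWithin_of_forall fun s hs => le_csSup hS (hmem s hs))

lemma bdd_dg (hsys : ScalarAdmissible f g) :
    BddAbove ((fun x => |deriv g x|) '' Icc (0:ℝ) 1) := by
  obtain ⟨C, hC⟩ := isCompact_Icc.exists_bound_of_continuousOn (dg_contDiffOn hsys).continuousOn
  refine ⟨max C 0, ?_⟩
  rintro _ ⟨t, ht, rfl⟩
  by_cases hd : DifferentiableAt ℝ g t
  · have h1 : derivWithin g (Icc (0:ℝ) 1) t = deriv g t :=
      (hd.hasDerivAt.hasDerivWithinAt (s := Icc (0:ℝ) 1)).derivWithin (udo t ht)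
    have h2 := hC t ht
    rw [Real.norm_eq_abs, h1] at h2
    exact le_trans h2 (le_max_left _ _)
  · simp only [deriv_zero_of_not_differentiableAt hd, abs_zero]
    exact le_max_right C 0

lemma ddg_contOn (hsys : ScalarAdmissible f g) :
    ContinuousOn (derivWithin (derivWithin g (Icc (0:ℝ) 1)) (Icc (0:ℝ) 1)) (Icc (0:ℝ) 1) :=
  ((dg_contDiffOn hsys).derivWithin (m := 0) udo (by norm_num)).continuousOn

lemma deriv_g_eq_of_diff (hsys : ScalarAdmissible f g) {t : ℝ} (ht : t ∈ Icc (0:ℝ) 1)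
    (hd : ContinuousAt (deriv g) t) : deriv g t = derivWithin g (Icc (0:ℝ) 1) t := by
  have hne : (𝓝[Ioo (0:ℝ) 1] t).NeBot := by
    apply mem_closure_iff_nhdsWithin_neBot.mp
    rw [closure_Ioo one_ne_zero.symm]; exact ht
  have l1 : Tendsto (deriv g) (𝓝[Ioo (0:ℝ) 1] t) (𝓝 (deriv g t)) :=
    hd.continuousWithinAt
  have l2 : Tendsto (derivWithin g (Icc (0:ℝ) 1)) (𝓝[Ioo (0:ℝ) 1] t)
      (𝓝 (derivWithin g (Icc (0:ℝ) 1) t)) :=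
    (((dg_contDiffOn hsys).continuousOn) t ht).mono Ioo_subset_Icc_self
  have l3 : Tendsto (deriv g) (𝓝[Ioo (0:ℝ) 1] t) (𝓝 (derivWithin g (Icc (0:ℝ) 1) t)) :=
    l2.congr' (eventually_nhdsWithin_of_forall fun s hs => (deriv_g_eq hsys hs).symm)
  exact tendsto_nhds_unique l1 l3

lemma Ioo_union_mem (t : ℝ) (ht : t ∈ Icc (0:ℝ) 1) :
    Ioo (0:ℝ) 1 ∪ {t} ∈ 𝓝[Icc (0:ℝ) 1] t := by
  rcases eq_or_lt_of_le ht.1 with h0 | h0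
  · apply mem_nhdsWithin.mpr
    refine ⟨Iio 1, isOpen_Iio, by rw [← h0]; exact Set.mem_Iio.mpr zero_lt_one, ?_⟩
    rintro s ⟨hs1, hs2⟩
    rcases eq_or_lt_of_le hs2.1 with h | h
    · right; rw [Set.mem_singleton_iff, ← h, ← h0]
    · left; exact ⟨h, hs1⟩
  rcases eq_or_lt_of_le ht.2 with h1 | h1
  · apply mem_nhdsWithin.mpr
    refine ⟨Ioi 0, isOpen_Ioi, by rw [h1]; exact Set.mem_Ioi.mpr zero_lt_one, ?_⟩
    rintro s ⟨hs1, hs2⟩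
    rcases eq_or_lt_of_le hs2.2 with h | h
    · right; rw [Set.mem_singleton_iff, h, h1]
    · left; exact ⟨hs1, h⟩
  · exact mem_nhdsWithin_of_mem_nhds
      (Filter.mem_of_superset (Ioo_mem_nhds h0 h1) subset_union_left)

lemma deriv2_eq_of_diff (hsys : ScalarAdmissible f g) {t : ℝ} (ht : t ∈ Icc (0:ℝ) 1)
    (hd : DifferentiableAt ℝ (deriv g) t) :
    deriv (deriv g) t = derivWithin (derivWithin g (Icc (0:ℝ) 1)) (Icc (0:ℝ) 1) t := by
  have h1 : deriv g t = derivWithin g (Icc (0:ℝ) 1) t :=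
    deriv_g_eq_of_diff hsys ht hd.continuousAt
  have h2 : HasDerivWithinAt (deriv g) (deriv (deriv g) t) (Icc (0:ℝ) 1) t :=
    hd.hasDerivAt.hasDerivWithinAt
  have heq : derivWithin g (Icc (0:ℝ) 1) =ᶠ[𝓝[Icc (0:ℝ) 1] t] deriv g := by
    apply Filter.eventuallyEq_of_mem (Ioo_union_mem t ht)
    rintro s (hs | hs)
    · exact (deriv_g_eq hsys hs).symm
    · rw [Set.mem_singleton_iff] at hs
      rw [hs]; exact h1.symm
  have h3 : HasDerivWithinAt (derivWithin g (Icc (0:ℝ) 1)) (deriv (deriv g) t)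
      (Icc (0:ℝ) 1) t := h2.congr_of_eventuallyEq heq (by rw [h1])
  exact (h3.derivWithin (udo t ht)).symm

lemma bdd_ddg (hsys : ScalarAdmissible f g) :
    BddAbove ((fun x => |deriv (deriv g) x|) '' Icc (0:ℝ) 1) := by
  obtain ⟨C, hC⟩ := isCompact_Icc.exists_bound_of_continuousOn (ddg_contOn hsys)
  refine ⟨max C 0, ?_⟩
  rintro _ ⟨t, ht, rfl⟩
  by_cases hd : DifferentiableAt ℝ (deriv g) t
  · have h1 := deriv2_eq_of_diff hsys ht hd
    have h2 := hC t ht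
    rw [Real.norm_eq_abs, ← h1] at h2
    exact le_trans h2 (le_max_left _ _)
  · simp only [deriv_zero_of_not_differentiableAt hd, abs_zero]
    exact le_max_right C 0

lemma bdd_f (hsys : ScalarAdmissible f g) :
    BddAbove ((fun p : ℝ × ℝ => |deriv (fun z => f z p.2) p.1|) ''
      (Icc (0:ℝ) 1 ×ˢ Icc (0:ℝ) 1)) := by
  set F := fun p : ℝ × ℝ => f p.1 p.2 with hF
  set B := Icc (0:ℝ) 1 ×ˢ Icc (0:ℝ) 1 with hB
  have hudoB : UniqueDiffOn ℝ B := udo.prod udo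
  have hFd : DifferentiableOn ℝ F B := hsys.f_smooth.differentiableOn two_ne_zero
  have hcont : ContinuousOn (fderivWithin ℝ F B) B :=
    hsys.f_smooth.continuousOn_fderivWithin hudoB (by norm_num)
  obtain ⟨C, hC⟩ := (isCompact_Icc.prod isCompact_Icc).exists_bound_of_continuousOn hcont
  refine ⟨max C 0, ?_⟩
  rintro _ ⟨p, hp, rfl⟩
  by_cases hd : DifferentiableAt ℝ (fun z => f z p.2) p.1
  · have hι : HasDerivWithinAt (fun z : ℝ => (z, p.2)) ((1:ℝ), (0:ℝ)) (Icc (0:ℝ) 1) p.1 :=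
      ((hasDerivAt_id p.1).prodMk (hasDerivAt_const p.1 p.2)).hasDerivWithinAt
    have hmaps : MapsTo (fun z : ℝ => (z, p.2)) (Icc (0:ℝ) 1) B :=
      fun z hz => Set.mk_mem_prod hz hp.2
    have hFw : HasFDerivWithinAt F (fderivWithin ℝ F B p) B p := (hFd p hp).hasFDerivWithinAt
    have hslice : HasDerivWithinAt (fun z => f z p.2)
        (fderivWithin ℝ F B p ((1:ℝ), (0:ℝ))) (Icc (0:ℝ) 1) p.1 := by
      have h := hFw.comp_hasDerivWithinAt (x := p.1) (by exact hι) hmaps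
      exact h
    have h2 := (hd.hasDerivAt.hasDerivWithinAt (s := Icc (0:ℝ) 1)).derivWithin (udo p.1 hp.1)
    have h3 := hslice.derivWithin (udo p.1 hp.1)
    have h1 : deriv (fun z => f z p.2) p.1 = fderivWithin ℝ F B p ((1:ℝ), (0:ℝ)) := by
      rw [← h2, ← h3]
    have hn : ‖((1:ℝ), (0:ℝ))‖ = 1 := by
      rw [Prod.norm_def]; simp
    calc |deriv (fun z => f z p.2) p.1| = ‖fderivWithin ℝ F B p ((1:ℝ), (0:ℝ))‖ := by
          rw [h1, Real.norm_eq_abs]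
      _ ≤ ‖fderivWithin ℝ F B p‖ * ‖((1:ℝ), (0:ℝ))‖ :=
          (fderivWithin ℝ F B p).le_opNorm _
      _ ≤ C := by rw [hn, mul_one]; exact hC p hp
      _ ≤ max C 0 := le_max_left _ _
  · simp only [deriv_zero_of_not_differentiableAt hd, abs_zero]
    exact le_max_right C 0

lemma abs_dg_le (hsys : ScalarAdmissible f g) :
    ∀ t ∈ Icc (0:ℝ) 1, |derivWithin g (Icc (0:ℝ) 1) t|
      ≤ sSup ((fun x => |deriv g x|) '' Icc (0:ℝ) 1) :=
  le_sSup_of_interior ((dg_contDiffOn hsys).continuousOn.abs) (bdd_dg hsys)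
    (fun t ht => ⟨t, Ioo_subset_Icc_self ht, by simp only []; rw [deriv_g_eq hsys ht]⟩)

lemma abs_ddg_le (hsys : ScalarAdmissible f g) :
    ∀ t ∈ Icc (0:ℝ) 1, |derivWithin (derivWithin g (Icc (0:ℝ) 1)) (Icc (0:ℝ) 1) t|
      ≤ sSup ((fun x => |deriv (deriv g) x|) '' Icc (0:ℝ) 1) := by
  refine le_sSup_of_interior ((ddg_contOn hsys).abs) (bdd_ddg hsys) (fun t ht => ?_)
  refine ⟨t, Ioo_subset_Icc_self ht, ?_⟩
  have e1 : deriv g =ᶠ[𝓝 t] derivWithin g (Icc (0:ℝ) 1) :=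
    Filter.eventuallyEq_of_mem (Ioo_mem_nhds ht.1 ht.2) (fun s hs => deriv_g_eq hsys hs)
  have e2 : deriv (deriv g) t = deriv (derivWithin g (Icc (0:ℝ) 1)) t := e1.deriv_eq
  have e3 : deriv (derivWithin g (Icc (0:ℝ) 1)) t
      = derivWithin (derivWithin g (Icc (0:ℝ) 1)) (Icc (0:ℝ) 1) t :=
    (derivWithin_of_mem_nhds (Icc_mem_nhds ht.1 ht.2)).symm
  simp only [e2, e3]

lemma abs_dfe_le (hsys : ScalarAdmissible f g) {ε : ℝ} (hε : ε ∈ Icc (0:ℝ) 1) :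
    ∀ t ∈ Icc (0:ℝ) 1, |derivWithin (fun z => f z ε) (Icc (0:ℝ) 1) t|
      ≤ sSup ((fun p : ℝ × ℝ => |deriv (fun z => f z p.2) p.1|) ''
          (Icc (0:ℝ) 1 ×ˢ Icc (0:ℝ) 1)) := by
  refine le_sSup_of_interior
    (((fe_contDiffOn hsys hε).derivWithin (m := 1) udo (by norm_num)).continuousOn.abs)
    (bdd_f hsys) (fun t ht => ?_)
  refine ⟨(t, ε), Set.mk_mem_prod (Ioo_subset_Icc_self ht) hε, ?_⟩
  have hda : DifferentiableAt ℝ (fun z => f z ε) t :=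
    (((fe_contDiffOn hsys hε).differentiableOn two_ne_zero) t
      (Ioo_subset_Icc_self ht)).differentiableAt (Icc_mem_nhds ht.1 ht.2)
  simp only
  rw [derivWithin_of_mem_nhds (Icc_mem_nhds ht.1 ht.2)]

lemma Kfg_nonneg (f : ℝ → ℝ → ℝ) (g : ℝ → ℝ) : 0 ≤ Kfg f g := by
  unfold Kfg
  have h1 : (0:ℝ) ≤ sSup ((fun x => |deriv g x|) '' Icc (0:ℝ) 1) :=
    Real.sSup_nonneg (by rintro _ ⟨t, _, rfl⟩; positivity)
  have h2 : (0:ℝ) ≤ sSup ((fun p : ℝ × ℝ => |deriv (fun z => f z p.2) p.1|) ''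
      (Icc (0:ℝ) 1 ×ˢ Icc (0:ℝ) 1)) :=
    Real.sSup_nonneg (by rintro _ ⟨t, _, rfl⟩; positivity)
  have h3 : (0:ℝ) ≤ sSup ((fun x => |deriv (deriv g) x|) '' Icc (0:ℝ) 1) :=
    Real.sSup_nonneg (by rintro _ ⟨t, _, rfl⟩; positivity)
  positivity

end Aux2

/-- The explicit gradient coordinate `∂U/∂y_i`, written with the `within`-derivative of `g`. -/
def psibar (f : ℝ → ℝ → ℝ) (g : ℝ → ℝ) (n w : ℕ) (ε : ℝ) (i : Fin n) (y : Fin n → ℝ) : ℝ :=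
  derivWithin g (Icc (0:ℝ) 1) (y i) *
    (y i - ∑ k, Amat n w k i * f ((Amat n w).mulVec (fun j => g (y j)) k) ε)

section Grad
variable {f : ℝ → ℝ → ℝ} {g : ℝ → ℝ} {n w : ℕ} {ε : ℝ}

lemma theta_mem_Ioo (hsys : ScalarAdmissible f g) (hw : 1 ≤ w) {y : Fin n → ℝ}
    (hy : ∀ k, y k ∈ Ioo (0:ℝ) 1) (k : Fin n) :
    ∑ j, Amat n w k j * g (y j) ∈ Ioo (0:ℝ) 1 := by
  have hne : (Finset.univ : Finset (Fin n)).Nonempty := ⟨k, Finset.mem_univ k⟩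
  constructor
  · have h1 : Amat n w k k * g (y k) ≤ ∑ j, Amat n w k j * g (y j) :=
      Finset.single_le_sum (f := fun j => Amat n w k j * g (y j))
        (fun j _ => mul_nonneg (Amat_nonneg n w k j)
          (hsys.g_mem (y j) (Ioo_subset_Icc_self (hy j))).1) (Finset.mem_univ k)
    have h2 : 0 < Amat n w k k * g (y k) :=
      mul_pos (Amat_diag_pos n w hw k) (g_pos hsys (hy k))
    linarith
  · set m := Finset.univ.sup' hne (fun j => g (y j)) with hm
    have hm1 : m < 1 := by
      rw [hm, Finset.sup'_lt_iff]
      exact fun j _ => g_lt_one hsys ⟨(hy j).1.le, (hy j).2⟩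
    have hm0 : 0 ≤ m :=
      le_trans (g_pos hsys (hy k)).le
        (Finset.le_sup' (fun j => g (y j)) (Finset.mem_univ k))
    have h3 : ∑ j, Amat n w k j * g (y j) ≤ ∑ j, Amat n w k j * m :=
      Finset.sum_le_sum fun j _ => mul_le_mul_of_nonneg_left
        (Finset.le_sup' (fun j => g (y j)) (Finset.mem_univ j)) (Amat_nonneg n w k j)
    have h4 : ∑ j, Amat n w k j * m = (∑ j, Amat n w k j) * m := by
      rw [Finset.sum_mul]
    have h5 : (∑ j, Amat n w k j) * m ≤ 1 * m :=
      mul_le_mul_of_nonneg_right (Amat_row_sum_le n w hw k) hm0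
    calc ∑ j, Amat n w k j * g (y j) ≤ (∑ j, Amat n w k j) * m := by rw [← h4]; exact h3
      _ ≤ 1 * m := h5
      _ = m := one_mul m
      _ < 1 := hm1

lemma hasFDerivAt_U (hsys : ScalarAdmissible f g) (hw : 1 ≤ w) (hε : ε ∈ Icc (0:ℝ) 1)
    {y : Fin n → ℝ} (hy : ∀ k, y k ∈ Ioo (0:ℝ) 1) :
    HasFDerivAt (fun z => coupledPotential f g n w z ε)
      ((∑ m, (deriv g (y m) * y m + g (y m) * 1) • ContinuousLinearMap.proj (R := ℝ)
          (φ := fun _ : Fin n => ℝ) m)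
        - (∑ m, g (y m) • ContinuousLinearMap.proj (R := ℝ) (φ := fun _ : Fin n => ℝ) m)
        - ∑ k, (f (∑ j, Amat n w k j * g (y j)) ε)
            • (∑ j, Amat n w k j • (deriv g (y j) • ContinuousLinearMap.proj (R := ℝ)
                  (φ := fun _ : Fin n => ℝ) j))) y := by
  have hgc : ContinuousOn g (Icc (0:ℝ) 1) := hsys.g_smooth.continuousOn
  have hfc : ContinuousOn (fun z => f z ε) (Icc (0:ℝ) 1) := (fe_contDiffOn hsys hε).continuousOn
  have hgd : ∀ j : Fin n, HasDerivAt g (deriv g (y j)) (y j) :=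
    fun j => (g_diffAt hsys (hy j)).hasDerivAt
  have hθ : ∀ k : Fin n, (∑ j, Amat n w k j * g (y j)) ∈ Ioo (0:ℝ) 1 :=
    theta_mem_Ioo hsys hw hy
  have hGd : ∀ j : Fin n, HasDerivAt (Gint g) (g (y j)) (y j) := by
    intro j
    apply intervalIntegral.integral_hasDerivAt_right
    · apply ContinuousOn.intervalIntegrable
      apply hgc.mono
      rw [uIcc_of_le (hy j).1.le]
      exact Icc_subset_Icc le_rfl (hy j).2.le
    · exact ContinuousOn.stronglyMeasurableAtFilter isOpen_Ioo
        (hgc.mono Ioo_subset_Icc_self) (y j) (hy j)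
    · exact hgc.continuousAt (Icc_mem_nhds (hy j).1 (hy j).2)
  have hFd : ∀ k : Fin n, HasDerivAt (fun t => Fint f t ε)
      (f (∑ j, Amat n w k j * g (y j)) ε) (∑ j, Amat n w k j * g (y j)) := by
    intro k
    apply intervalIntegral.integral_hasDerivAt_right
    · apply ContinuousOn.intervalIntegrable
      apply hfc.mono
      rw [uIcc_of_le (hθ k).1.le]
      exact Icc_subset_Icc le_rfl (hθ k).2.le
    · exact ContinuousOn.stronglyMeasurableAtFilter isOpen_Ioo
        (hfc.mono Ioo_subset_Icc_self) _ (hθ k)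
    · exact hfc.continuousAt (Icc_mem_nhds (hθ k).1 (hθ k).2)
  have hP : ∀ m : Fin n, HasFDerivAt (fun z : Fin n → ℝ => z m)
      (ContinuousLinearMap.proj (R := ℝ) (φ := fun _ : Fin n => ℝ) m) y :=
    fun m =>
      (ContinuousLinearMap.proj (R := ℝ) (φ := fun _ : Fin n => ℝ) m).hasFDerivAt
  unfold coupledPotential
  apply HasFDerivAt.sub
  apply HasFDerivAt.sub
  · apply HasFDerivAt.fun_sum
    intro m _
    exact ((hgd m).mul (hasDerivAt_id (y m))).comp_hasFDerivAt y (hP m)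
  · apply HasFDerivAt.fun_sum
    intro m _
    exact (hGd m).comp_hasFDerivAt y (hP m)
  · apply HasFDerivAt.fun_sum
    intro k _
    have hmv : (fun z : Fin n → ℝ => Fint f ((Amat n w).mulVec (fun j => g (z j)) k) ε)
        = fun z : Fin n → ℝ => Fint f (∑ j, Amat n w k j * g (z j)) ε := by
      funext z; rw [Amat_mulVec_apply]
    rw [hmv]
    have hk' : HasFDerivAt (fun z : Fin n → ℝ => ∑ j, Amat n w k j * g (z j))
        (∑ j, Amat n w k j • (deriv g (y j) • ContinuousLinearMap.proj (R := ℝ)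
            (φ := fun _ : Fin n => ℝ) j)) y := by
      apply HasFDerivAt.fun_sum
      intro j _
      exact ((hgd j).comp_hasFDerivAt y (hP j)).const_mul (Amat n w k j)
    exact (hFd k).comp_hasFDerivAt y hk'

end Grad

section Grad2
variable {f : ℝ → ℝ → ℝ} {g : ℝ → ℝ} {n w : ℕ} {ε : ℝ}

lemma phi_eq_psibar (hsys : ScalarAdmissible f g) (hw : 1 ≤ w) (hε : ε ∈ Icc (0:ℝ) 1)
    {y : Fin n → ℝ} (hy : ∀ k, y k ∈ Ioo (0:ℝ) 1) (i : Fin n) :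
    fderiv ℝ (fun z => coupledPotential f g n w z ε) y (Pi.single i 1)
      = psibar f g n w ε i y := by
  have hU := hasFDerivAt_U hsys hw hε hy
  rw [hU.fderiv]
  unfold psibar
  simp only [ContinuousLinearMap.sub_apply, ContinuousLinearMap.sum_apply,
    ContinuousLinearMap.smul_apply, ContinuousLinearMap.proj_apply, Pi.single_apply,
    smul_eq_mul, mul_ite, mul_one, mul_zero, Finset.sum_ite_eq', Finset.mem_univ, if_true]
  rw [← deriv_g_eq hsys (hy i)]
  have hmv : ∀ k, (Amat n w).mulVec (fun j => g (y j)) k = ∑ j, Amat n w k j * g (y j) :=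
    fun k => Amat_mulVec_apply n w _ k
  simp only [hmv]
  have hsum : ∑ k, f (∑ j, Amat n w k j * g (y j)) ε * (Amat n w k i * deriv g (y i))
      = deriv g (y i) * ∑ k, Amat n w k i * f (∑ j, Amat n w k j * g (y j)) ε := by
    rw [Finset.mul_sum]
    exact Finset.sum_congr rfl fun k _ => by ring
  rw [hsum]
  ring

lemma psibar_hasFDeriv (hsys : ScalarAdmissible f g) (hw : 1 ≤ w) (hε : ε ∈ Icc (0:ℝ) 1)
    {x : Fin n → ℝ} (hx : ∀ k, x k ∈ Icc (0:ℝ) 1) (i : Fin n) :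
    ∃ M : (Fin n → ℝ) →L[ℝ] ℝ,
      HasFDerivWithinAt (psibar f g n w ε i) M
        ({y : Fin n → ℝ | ∀ k, y k ∈ Ioo (0:ℝ) 1} ∪ {x}) x ∧
      ∀ j' : Fin n, M (Pi.single j' 1) =
        (if i = j' then
          derivWithin (derivWithin g (Icc (0:ℝ) 1)) (Icc (0:ℝ) 1) (x i) *
            (x i - ∑ k, Amat n w k i * f (∑ j, Amat n w k j * g (x j)) ε)
          + derivWithin g (Icc (0:ℝ) 1) (x i) else 0)
        - derivWithin g (Icc (0:ℝ) 1) (x i) *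
            ∑ k, Amat n w k i
              * derivWithin (fun z => f z ε) (Icc (0:ℝ) 1) (∑ j, Amat n w k j * g (x j))
              * (Amat n w k j' * derivWithin g (Icc (0:ℝ) 1) (x j')) := by
  classical
  set T : Set (Fin n → ℝ) := {y : Fin n → ℝ | ∀ k, y k ∈ Ioo (0:ℝ) 1} ∪ {x} with hT
  have hTsub : ∀ m : Fin n, MapsTo (fun y : Fin n → ℝ => y m) T (Icc (0:ℝ) 1) := by
    rintro m y (hy | hy)
    · exact Ioo_subset_Icc_self (hy m)
    · rw [Set.mem_singleton_iff] at hy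
      rw [hy]; exact hx m
  have hPw : ∀ m : Fin n, HasFDerivWithinAt (fun z : Fin n → ℝ => z m)
      (ContinuousLinearMap.proj (R := ℝ) (φ := fun _ : Fin n => ℝ) m) T x :=
    fun m =>
      (ContinuousLinearMap.proj (R := ℝ) (φ := fun _ : Fin n => ℝ) m).hasFDerivAt.hasFDerivWithinAt
  have hgw : ∀ j : Fin n, HasDerivWithinAt g (derivWithin g (Icc (0:ℝ) 1) (x j))
      (Icc (0:ℝ) 1) (x j) := fun j => ((g_diffOn hsys) (x j) (hx j)).hasDerivWithinAt
  have hθm : ∀ k : Fin n, (∑ j, Amat n w k j * g (x j)) ∈ Icc (0:ℝ) 1 :=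
    fun k => weighted_sum_mem n w hw _ (fun j => hsys.g_mem (x j) (hx j)) k
  have hc : HasFDerivWithinAt (fun y : Fin n → ℝ => derivWithin g (Icc (0:ℝ) 1) (y i))
      ((derivWithin (derivWithin g (Icc (0:ℝ) 1)) (Icc (0:ℝ) 1) (x i)) •
        ContinuousLinearMap.proj (R := ℝ) (φ := fun _ : Fin n => ℝ) i) T x := by
    have h1 : HasDerivWithinAt (derivWithin g (Icc (0:ℝ) 1))
        (derivWithin (derivWithin g (Icc (0:ℝ) 1)) (Icc (0:ℝ) 1) (x i)) (Icc (0:ℝ) 1) (x i) :=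
      (((dg_contDiffOn hsys).differentiableOn one_ne_zero) (x i) (hx i)).hasDerivWithinAt
    exact h1.comp_hasFDerivWithinAt x (hPw i) (hTsub i)
  have hhk : ∀ k : Fin n, HasFDerivWithinAt (fun y : Fin n → ℝ => ∑ j, Amat n w k j * g (y j))
      (∑ j, Amat n w k j • (derivWithin g (Icc (0:ℝ) 1) (x j) •
        ContinuousLinearMap.proj (R := ℝ) (φ := fun _ : Fin n => ℝ) j)) T x := by
    intro k
    apply HasFDerivWithinAt.fun_sum
    intro j _
    exact (((hgw j).comp_hasFDerivWithinAt x (hPw j) (hTsub j))).const_mul (Amat n w k j)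
  have hmapsk : ∀ k : Fin n, MapsTo (fun y : Fin n → ℝ => ∑ j, Amat n w k j * g (y j))
      T (Icc (0:ℝ) 1) := by
    intro k y hy
    exact weighted_sum_mem n w hw _ (fun j => hsys.g_mem (y j) (hTsub j hy)) k
  have hFk : ∀ k : Fin n, HasFDerivWithinAt
      (fun y : Fin n → ℝ => f (∑ j, Amat n w k j * g (y j)) ε)
      ((derivWithin (fun z => f z ε) (Icc (0:ℝ) 1) (∑ j, Amat n w k j * g (x j))) •
        (∑ j, Amat n w k j • (derivWithin g (Icc (0:ℝ) 1) (x j) •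
          ContinuousLinearMap.proj (R := ℝ) (φ := fun _ : Fin n => ℝ) j))) T x := by
    intro k
    have hfe : HasDerivWithinAt (fun z => f z ε)
        (derivWithin (fun z => f z ε) (Icc (0:ℝ) 1) (∑ j, Amat n w k j * g (x j)))
        (Icc (0:ℝ) 1) (∑ j, Amat n w k j * g (x j)) :=
      (((fe_contDiffOn hsys hε).differentiableOn two_ne_zero) _ (hθm k)).hasDerivWithinAt
    exact hfe.comp_hasFDerivWithinAt x (hhk k) (hmapsk k)
  have hd : HasFDerivWithinAt
      (fun y : Fin n → ℝ => y i - ∑ k, Amat n w k i * f (∑ j, Amat n w k j * g (y j)) ε)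
      (ContinuousLinearMap.proj (R := ℝ) (φ := fun _ : Fin n => ℝ) i -
        ∑ k, Amat n w k i • ((derivWithin (fun z => f z ε) (Icc (0:ℝ) 1)
            (∑ j, Amat n w k j * g (x j))) •
          (∑ j, Amat n w k j • (derivWithin g (Icc (0:ℝ) 1) (x j) •
            ContinuousLinearMap.proj (R := ℝ) (φ := fun _ : Fin n => ℝ) j)))) T x := by
    apply HasFDerivWithinAt.sub (hPw i)
    apply HasFDerivWithinAt.fun_sum
    intro k _
    exact (hFk k).const_mul (Amat n w k i)
  have hpsi : psibar f g n w ε i = fun y : Fin n → ℝ =>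
      (derivWithin g (Icc (0:ℝ) 1) (y i)) *
        (y i - ∑ k, Amat n w k i * f (∑ j, Amat n w k j * g (y j)) ε) := by
    funext y
    unfold psibar
    simp only [Amat_mulVec_apply]
  refine ⟨_, by rw [hpsi]; exact hc.mul hd, ?_⟩
  intro j'
  simp only [ContinuousLinearMap.add_apply, ContinuousLinearMap.smul_apply,
    ContinuousLinearMap.sub_apply, ContinuousLinearMap.sum_apply,
    ContinuousLinearMap.proj_apply, Pi.single_apply, smul_eq_mul, mul_ite, mul_one, mul_zero,
    Finset.sum_ite_eq', Finset.mem_univ, if_true]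
  have hS : (∑ k, Amat n w k i * (derivWithin (fun z => f z ε) (Icc (0:ℝ) 1)
      (∑ j, Amat n w k j * g (x j)) * (Amat n w k j' * derivWithin g (Icc (0:ℝ) 1) (x j'))))
      = ∑ k, Amat n w k i * derivWithin (fun z => f z ε) (Icc (0:ℝ) 1)
          (∑ j, Amat n w k j * g (x j)) * (Amat n w k j' * derivWithin g (Icc (0:ℝ) 1) (x j')) :=
    Finset.sum_congr rfl fun k _ => by ring
  rw [hS]
  split_ifs with h <;> ring

end Grad2

section Cone
variable {n : ℕ}

lemma cone_deriv_eq {φ ψ : (Fin n → ℝ) → ℝ} {x : Fin n → ℝ} {T : Set (Fin n → ℝ)}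
    {M : (Fin n → ℝ) →L[ℝ] ℝ}
    (hM : HasFDerivWithinAt ψ M T x) (hdiff : DifferentiableAt ℝ φ x)
    (hsub : {y : Fin n → ℝ | ∀ k, y k ∈ Ioo (0:ℝ) 1} ⊆ T) (hxT : x ∈ T)
    (v : Fin n → ℝ)
    (hv : ∀ᶠ t in 𝓝[>] (0:ℝ), ∀ k, (x + t • v) k ∈ Ioo (0:ℝ) 1)
    (hφψ : ∀ y : Fin n → ℝ, (∀ k, y k ∈ Ioo (0:ℝ) 1) → φ y = ψ y) :
    fderiv ℝ φ x v = M v := by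
  set L := fderiv ℝ φ x with hL
  have hline : HasDerivAt (fun t : ℝ => x + t • v) v 0 := by
    simpa using ((hasDerivAt_id (0:ℝ)).smul_const v).const_add x
  have h0 : (fun t : ℝ => x + t • v) 0 = x := by simp
  have hφF : HasFDerivAt φ L ((fun t : ℝ => x + t • v) 0) := by
    rw [h0]; exact hdiff.hasFDerivAt
  have h1 : HasDerivAt (fun t : ℝ => φ (x + t • v)) (L v) 0 :=
    hφF.comp_hasDerivAt 0 hline
  set s : Set ℝ := ({t : ℝ | ∀ k, (x + t • v) k ∈ Ioo (0:ℝ) 1} ∩ Ioi 0) ∪ {0} with hs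
  have hmaps : MapsTo (fun t : ℝ => x + t • v) s T := by
    rintro t (ht | ht)
    · exact hsub ht.1
    · rw [Set.mem_singleton_iff] at ht
      rw [ht]
      simpa using hxT
  have hMl : HasFDerivWithinAt ψ M T ((fun t : ℝ => x + t • v) 0) := by rw [h0]; exact hM
  have h2 : HasDerivWithinAt (fun t : ℝ => ψ (x + t • v)) (M v) s 0 :=
    hMl.comp_hasDerivWithinAt 0 hline.hasDerivWithinAt hmaps
  have hsm : s \ {0} ∈ 𝓝[>] (0:ℝ) := by
    apply Filter.mem_of_superset (Filter.inter_mem hv self_mem_nhdsWithin)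
    rintro t ⟨ht1, ht2⟩
    exact ⟨Or.inl ⟨ht1, ht2⟩, ne_of_gt ht2⟩
  have l1 : Tendsto (slope (fun t : ℝ => φ (x + t • v)) 0) (𝓝[>] (0:ℝ)) (𝓝 (L v)) :=
    (hasDerivAt_iff_tendsto_slope.mp h1).mono_left
      (nhdsWithin_mono 0 (fun t ht => ne_of_gt ht))
  have l2 : Tendsto (slope (fun t : ℝ => ψ (x + t • v)) 0) (𝓝[>] (0:ℝ)) (𝓝 (M v)) :=
    (hasDerivWithinAt_iff_tendsto_slope.mp h2).mono_left (nhdsWithin_le_iff.mpr hsm)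
  have hdq : Tendsto (fun t : ℝ => slope (fun t : ℝ => φ (x + t • v)) 0 t
      - slope (fun t : ℝ => ψ (x + t • v)) 0 t) (𝓝[>] (0:ℝ)) (𝓝 (L v - M v)) := l1.sub l2
  set c : ℝ := ψ x - φ x with hc
  have heq2 : ∀ᶠ t in 𝓝[>] (0:ℝ), slope (fun t : ℝ => φ (x + t • v)) 0 t
      - slope (fun t : ℝ => ψ (x + t • v)) 0 t = c / t := by
    filter_upwards [hv, self_mem_nhdsWithin] with t ht ht0
    rw [slope_def_field, slope_def_field, hφψ _ ht]
    simp only [zero_smul, add_zero, sub_zero]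
    have htne : t ≠ 0 := ne_of_gt ht0
    field_simp
    rw [hc]; ring
  have h3 : Tendsto (fun t : ℝ => t * (slope (fun t : ℝ => φ (x + t • v)) 0 t
      - slope (fun t : ℝ => ψ (x + t • v)) 0 t)) (𝓝[>] (0:ℝ)) (𝓝 (0 * (L v - M v))) := by
    apply Tendsto.mul _ hdq
    exact tendsto_id.mono_right nhdsWithin_le_nhds
  have h4 : ∀ᶠ t in 𝓝[>] (0:ℝ), t * (slope (fun t : ℝ => φ (x + t • v)) 0 t
      - slope (fun t : ℝ => ψ (x + t • v)) 0 t) = c := by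
    filter_upwards [heq2, self_mem_nhdsWithin] with t ht ht0
    rw [ht]
    have htne : t ≠ 0 := ne_of_gt ht0
    field_simp
  have hc0 : c = 0 := by
    have h5 : Tendsto (fun _ : ℝ => c) (𝓝[>] (0:ℝ)) (𝓝 (0 * (L v - M v))) := h3.congr' h4
    have h6 : Tendsto (fun _ : ℝ => c) (𝓝[>] (0:ℝ)) (𝓝 c) := tendsto_const_nhds
    rw [tendsto_nhds_unique h6 h5]
    ring
  have heq3 : ∀ᶠ t in 𝓝[>] (0:ℝ), slope (fun t : ℝ => φ (x + t • v)) 0 t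
      - slope (fun t : ℝ => ψ (x + t • v)) 0 t = 0 := by
    filter_upwards [heq2] with t ht
    rw [ht, hc0, zero_div]
  have h7 : Tendsto (fun _ : ℝ => (0:ℝ)) (𝓝[>] (0:ℝ)) (𝓝 (L v - M v)) := hdq.congr' heq3
  have h8 := tendsto_nhds_unique (tendsto_const_nhds (α := ℝ) (f := 𝓝[>] (0:ℝ))) h7
  linarith [h8]

lemma inward_aux {a u t : ℝ} (ha : a ∈ Icc (0:ℝ) 1) (ht : t ∈ Ioo (0:ℝ) (1/4))
    (hu : (a ≤ 1/2 ∧ 1 ≤ u ∧ u ≤ 3/2) ∨ (1/2 < a ∧ -1 ≤ u ∧ u ≤ -1/2)) :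
    a + t * u ∈ Ioo (0:ℝ) 1 := by
  obtain ⟨ha0, ha1⟩ := ha
  obtain ⟨ht0, ht1⟩ := ht
  rcases hu with ⟨h1, h2, h3⟩ | ⟨h1, h2, h3⟩ <;> constructor <;> nlinarith

end Cone

section FinalBound
variable {f : ℝ → ℝ → ℝ} {g : ℝ → ℝ} {n w : ℕ} {ε : ℝ}

lemma hess_sum_bound (hsys : ScalarAdmissible f g) (hw : 1 ≤ w) (hε : ε ∈ Icc (0:ℝ) 1)
    {x : Fin n → ℝ} (hx : ∀ k, x k ∈ Icc (0:ℝ) 1) (i : Fin n) :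
    ∑ j : Fin n, |(if i = j then
        derivWithin (derivWithin g (Icc (0:ℝ) 1)) (Icc (0:ℝ) 1) (x i) *
          (x i - ∑ k, Amat n w k i * f (∑ j', Amat n w k j' * g (x j')) ε)
        + derivWithin g (Icc (0:ℝ) 1) (x i) else 0)
      - derivWithin g (Icc (0:ℝ) 1) (x i) *
          ∑ k, Amat n w k i
            * derivWithin (fun z => f z ε) (Icc (0:ℝ) 1) (∑ j', Amat n w k j' * g (x j'))
            * (Amat n w k j * derivWithin g (Icc (0:ℝ) 1) (x j))|
      ≤ Kfg f g := by
  set Mg := sSup ((fun x => |deriv g x|) '' Icc (0:ℝ) 1) with hMg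
  set Mf := sSup ((fun p : ℝ × ℝ => |deriv (fun z => f z p.2) p.1|) ''
      (Icc (0:ℝ) 1 ×ˢ Icc (0:ℝ) 1)) with hMf
  set Mgg := sSup ((fun x => |deriv (deriv g) x|) '' Icc (0:ℝ) 1) with hMgg
  have hMg0 : 0 ≤ Mg := Real.sSup_nonneg (by rintro _ ⟨t, _, rfl⟩; positivity)
  have hMf0 : 0 ≤ Mf := Real.sSup_nonneg (by rintro _ ⟨t, _, rfl⟩; positivity)
  have hMgg0 : 0 ≤ Mgg := Real.sSup_nonneg (by rintro _ ⟨t, _, rfl⟩; positivity)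
  have hdg : ∀ t ∈ Icc (0:ℝ) 1, |derivWithin g (Icc (0:ℝ) 1) t| ≤ Mg := abs_dg_le hsys
  have hddg : ∀ t ∈ Icc (0:ℝ) 1,
      |derivWithin (derivWithin g (Icc (0:ℝ) 1)) (Icc (0:ℝ) 1) t| ≤ Mgg := abs_ddg_le hsys
  have hdfe : ∀ t ∈ Icc (0:ℝ) 1, |derivWithin (fun z => f z ε) (Icc (0:ℝ) 1) t| ≤ Mf :=
    abs_dfe_le hsys hε
  have hθm : ∀ k : Fin n, (∑ j', Amat n w k j' * g (x j')) ∈ Icc (0:ℝ) 1 :=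
    fun k => weighted_sum_mem n w hw _ (fun j => hsys.g_mem (x j) (hx j)) k
  -- |x i - σ| ≤ 1
  have hσ : (∑ k, Amat n w k i * f (∑ j', Amat n w k j' * g (x j')) ε) ∈ Icc (0:ℝ) 1 := by
    constructor
    · exact Finset.sum_nonneg fun k _ => mul_nonneg (Amat_nonneg n w k i)
        (hsys.f_mem _ (hθm k) ε hε).1
    · calc ∑ k, Amat n w k i * f (∑ j', Amat n w k j' * g (x j')) ε
          ≤ ∑ k, Amat n w k i := Finset.sum_le_sum fun k _ => by
            nlinarith [(hsys.f_mem _ (hθm k) ε hε).1, (hsys.f_mem _ (hθm k) ε hε).2,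
              Amat_nonneg n w k i]
        _ ≤ 1 := Amat_col_sum_le n w hw i
  have hxσ : |x i - ∑ k, Amat n w k i * f (∑ j', Amat n w k j' * g (x j')) ε| ≤ 1 := by
    rw [abs_le]
    constructor <;> [nlinarith [(hx i).1, (hx i).2, hσ.1, hσ.2];
      nlinarith [(hx i).1, (hx i).2, hσ.1, hσ.2]]
  -- per-j bound
  have hperj : ∀ j : Fin n, |(if i = j then
        derivWithin (derivWithin g (Icc (0:ℝ) 1)) (Icc (0:ℝ) 1) (x i) *
          (x i - ∑ k, Amat n w k i * f (∑ j', Amat n w k j' * g (x j')) ε)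
        + derivWithin g (Icc (0:ℝ) 1) (x i) else 0)
      - derivWithin g (Icc (0:ℝ) 1) (x i) *
          ∑ k, Amat n w k i
            * derivWithin (fun z => f z ε) (Icc (0:ℝ) 1) (∑ j', Amat n w k j' * g (x j'))
            * (Amat n w k j * derivWithin g (Icc (0:ℝ) 1) (x j))|
      ≤ (if i = j then Mgg + Mg else 0)
        + Mg * Mf * Mg * ∑ k, Amat n w k i * Amat n w k j := by
    intro j
    have habs1 : |(if i = j then
        derivWithin (derivWithin g (Icc (0:ℝ) 1)) (Icc (0:ℝ) 1) (x i) *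
          (x i - ∑ k, Amat n w k i * f (∑ j', Amat n w k j' * g (x j')) ε)
        + derivWithin g (Icc (0:ℝ) 1) (x i) else 0)| ≤ (if i = j then Mgg + Mg else 0) := by
      split_ifs with h
      · calc |derivWithin (derivWithin g (Icc (0:ℝ) 1)) (Icc (0:ℝ) 1) (x i) *
            (x i - ∑ k, Amat n w k i * f (∑ j', Amat n w k j' * g (x j')) ε)
            + derivWithin g (Icc (0:ℝ) 1) (x i)|
            ≤ |derivWithin (derivWithin g (Icc (0:ℝ) 1)) (Icc (0:ℝ) 1) (x i)| *
                |x i - ∑ k, Amat n w k i * f (∑ j', Amat n w k j' * g (x j')) ε|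
              + |derivWithin g (Icc (0:ℝ) 1) (x i)| := by
              rw [← abs_mul]; exact abs_add_le _ _
          _ ≤ Mgg * 1 + Mg := by
              have h1 := hddg (x i) (hx i)
              have h2 := hdg (x i) (hx i)
              have h3 := abs_nonneg (derivWithin (derivWithin g (Icc (0:ℝ) 1))
                (Icc (0:ℝ) 1) (x i))
              nlinarith
          _ = Mgg + Mg := by ring
      · simp
    have habs2 : |derivWithin g (Icc (0:ℝ) 1) (x i) *
          ∑ k, Amat n w k i
            * derivWithin (fun z => f z ε) (Icc (0:ℝ) 1) (∑ j', Amat n w k j' * g (x j'))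
            * (Amat n w k j * derivWithin g (Icc (0:ℝ) 1) (x j))|
        ≤ Mg * Mf * Mg * ∑ k, Amat n w k i * Amat n w k j := by
      rw [abs_mul]
      have hsum : |∑ k, Amat n w k i
            * derivWithin (fun z => f z ε) (Icc (0:ℝ) 1) (∑ j', Amat n w k j' * g (x j'))
            * (Amat n w k j * derivWithin g (Icc (0:ℝ) 1) (x j))|
          ≤ ∑ k, Amat n w k i * Mf * (Amat n w k j * Mg) := by
        refine le_trans (Finset.abs_sum_le_sum_abs _ _) (Finset.sum_le_sum fun k _ => ?_)
        rw [abs_mul, abs_mul, abs_mul, abs_of_nonneg (Amat_nonneg n w k i),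
          abs_of_nonneg (Amat_nonneg n w k j)]
        have h1 := hdfe _ (hθm k)
        have h2 := hdg (x j) (hx j)
        have h3 := abs_nonneg (derivWithin (fun z => f z ε) (Icc (0:ℝ) 1)
          (∑ j', Amat n w k j' * g (x j')))
        have h4 := abs_nonneg (derivWithin g (Icc (0:ℝ) 1) (x j))
        have h5 := Amat_nonneg n w k i
        have h6 := Amat_nonneg n w k j
        gcongr
      have hsum2 : ∑ k, Amat n w k i * Mf * (Amat n w k j * Mg)
          = Mf * Mg * ∑ k, Amat n w k i * Amat n w k j := by
        rw [Finset.mul_sum]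
        exact Finset.sum_congr rfl fun k _ => by ring
      have h2 := hdg (x i) (hx i)
      have hsumnn : (0:ℝ) ≤ ∑ k, Amat n w k i * Amat n w k j :=
        Finset.sum_nonneg fun k _ => mul_nonneg (Amat_nonneg n w k i) (Amat_nonneg n w k j)
      calc |derivWithin g (Icc (0:ℝ) 1) (x i)| * |∑ k, Amat n w k i
            * derivWithin (fun z => f z ε) (Icc (0:ℝ) 1) (∑ j', Amat n w k j' * g (x j'))
            * (Amat n w k j * derivWithin g (Icc (0:ℝ) 1) (x j))|
          ≤ Mg * (Mf * Mg * ∑ k, Amat n w k i * Amat n w k j) := by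
            apply mul_le_mul h2 (by rw [← hsum2]; exact hsum)
              (abs_nonneg _) hMg0
        _ = Mg * Mf * Mg * ∑ k, Amat n w k i * Amat n w k j := by ring
    exact le_trans (abs_sub _ _) (add_le_add habs1 habs2)
  -- sum over j
  refine le_trans (Finset.sum_le_sum fun j (_ : j ∈ Finset.univ) => hperj j) ?_
  calc ∑ j : Fin n, ((if i = j then Mgg + Mg else 0)
        + Mg * Mf * Mg * ∑ k, Amat n w k i * Amat n w k j)
      = (Mgg + Mg) + Mg * Mf * Mg * ∑ k, Amat n w k i * ∑ j, Amat n w k j := by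
        rw [Finset.sum_add_distrib, Finset.sum_ite_eq, ← Finset.mul_sum, Finset.sum_comm]
        simp [Finset.mul_sum]
    _ ≤ (Mgg + Mg) + Mg * Mf * Mg * 1 := by
        have hs0 : ∑ k, Amat n w k i * ∑ j, Amat n w k j ≤ ∑ k, Amat n w k i := by
          refine Finset.sum_le_sum fun k _ => ?_
          have h1 := Amat_row_sum_le n w hw k
          have h2 : (0:ℝ) ≤ ∑ j, Amat n w k j :=
            Finset.sum_nonneg fun j _ => Amat_nonneg n w k j
          nlinarith [Amat_nonneg n w k i]
        have hs1 : ∑ k, Amat n w k i * ∑ j, Amat n w k j ≤ 1 :=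
          le_trans hs0 (Amat_col_sum_le n w hw i)
        have hnn : (0:ℝ) ≤ Mg * Mf * Mg := by positivity
        nlinarith
    _ ≤ Kfg f g := by
        unfold Kfg
        rw [← hMg, ← hMf, ← hMgg]
        nlinarith
end FinalBound


section KeyLemma
variable {n : ℕ}

lemma fderiv_eq_M {φ ψ : (Fin n → ℝ) → ℝ} {x : Fin n → ℝ}
    {M : (Fin n → ℝ) →L[ℝ] ℝ}
    (hM : HasFDerivWithinAt ψ M ({y : Fin n → ℝ | ∀ k, y k ∈ Ioo (0:ℝ) 1} ∪ {x}) x)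
    (hdiff : DifferentiableAt ℝ φ x) (hx : ∀ k, x k ∈ Icc (0:ℝ) 1)
    (hφψ : ∀ y : Fin n → ℝ, (∀ k, y k ∈ Ioo (0:ℝ) 1) → φ y = ψ y) (j : Fin n) :
    fderiv ℝ φ x (Pi.single j 1) = M (Pi.single j 1) := by
  classical
  have hsub : {y : Fin n → ℝ | ∀ k, y k ∈ Ioo (0:ℝ) 1} ⊆
      ({y : Fin n → ℝ | ∀ k, y k ∈ Ioo (0:ℝ) 1} ∪ {x}) := subset_union_left
  have hxT : x ∈ ({y : Fin n → ℝ | ∀ k, y k ∈ Ioo (0:ℝ) 1} ∪ {x}) := Or.inr rfl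
  set c : Fin n → ℝ := fun k => if x k ≤ 1/2 then 1 else -1 with hcdef
  set u : Fin n → ℝ := fun k => c k + (if k = j then (2⁻¹:ℝ) else 0) with hudef
  have hev : ∀ v : Fin n → ℝ,
      (∀ k, (x k ≤ 1/2 ∧ 1 ≤ v k ∧ v k ≤ 3/2) ∨ (1/2 < x k ∧ -1 ≤ v k ∧ v k ≤ -1/2)) →
      ∀ᶠ t in 𝓝[>] (0:ℝ), ∀ k, (x + t • v) k ∈ Ioo (0:ℝ) 1 := by
    intro v hv
    filter_upwards [Ioo_mem_nhdsGT_of_mem (Set.mem_Ico.mpr ⟨le_rfl, by norm_num⟩ :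
      (0:ℝ) ∈ Ico (0:ℝ) (1/4))] with t ht k
    have h := inward_aux (hx k) ht (hv k)
    simpa [Pi.add_apply, Pi.smul_apply, smul_eq_mul] using h
  have hccond : ∀ k, (x k ≤ 1/2 ∧ 1 ≤ c k ∧ c k ≤ 3/2) ∨
      (1/2 < x k ∧ -1 ≤ c k ∧ c k ≤ -1/2) := by
    intro k
    by_cases h : x k ≤ 1/2
    · left
      have hck : c k = 1 := by simp only [hcdef]; exact if_pos h
      rw [hck]; exact ⟨h, le_rfl, by norm_num⟩
    · right
      have hck : c k = -1 := by simp only [hcdef]; exact if_neg h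
      rw [hck]; exact ⟨not_le.mp h, le_rfl, by norm_num⟩
  have hvcond : ∀ k, (x k ≤ 1/2 ∧ 1 ≤ u k ∧ u k ≤ 3/2) ∨
      (1/2 < x k ∧ -1 ≤ u k ∧ u k ≤ -1/2) := by
    intro k
    have hu : u k = c k + (if k = j then (2⁻¹:ℝ) else 0) := by rw [hudef]
    by_cases h : x k ≤ 1/2
    · left
      have hck : c k = 1 := by simp only [hcdef]; exact if_pos h
      refine ⟨h, ?_, ?_⟩ <;> rw [hu, hck] <;> split_ifs <;> norm_num
    · right
      have hck : c k = -1 := by simp only [hcdef]; exact if_neg h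
      refine ⟨not_le.mp h, ?_, ?_⟩ <;> rw [hu, hck] <;> split_ifs <;> norm_num
  have h1 := cone_deriv_eq hM hdiff hsub hxT c (hev c hccond) hφψ
  have h2 := cone_deriv_eq hM hdiff hsub hxT u (hev u hvcond) hφψ
  have e : Pi.single j (1:ℝ) = (2:ℝ) • u - (2:ℝ) • c := by
    funext k
    simp only [hudef, Pi.sub_apply, Pi.smul_apply, smul_eq_mul, Pi.single_apply]
    split_ifs <;> ring
  rw [e]
  have lhs : fderiv ℝ φ x ((2:ℝ) • u - (2:ℝ) • c)
      = 2 * fderiv ℝ φ x u - 2 * fderiv ℝ φ x c := by simp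
  have rhs : M ((2:ℝ) • u - (2:ℝ) • c) = 2 * M u - 2 * M c := by simp
  rw [lhs, rhs, h1, h2]

end KeyLemma

theorem coupled_potential_hessian_norm_le' (f : ℝ → ℝ → ℝ) (g : ℝ → ℝ)
    (hsys : ScalarAdmissible f g) (n w : ℕ) (hw : 1 ≤ w) (ε : ℝ) (hε : ε ∈ Icc (0:ℝ) 1)
    (x : Fin n → ℝ) (hx : ∀ i, x i ∈ Icc (0:ℝ) 1) :
    ∀ i : Fin n, ∑ j : Fin n, |hessEntry f g n w x ε i j| ≤ Kfg f g := by
  intro i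
  by_cases hdiff : DifferentiableAt ℝ
      (fun y : Fin n → ℝ =>
        fderiv ℝ (fun z : Fin n → ℝ => coupledPotential f g n w z ε) y (Pi.single i 1)) x
  · obtain ⟨M, hM, happ⟩ := psibar_hasFDeriv hsys hw hε hx i
    have key : ∀ j : Fin n, hessEntry f g n w x ε i j = M (Pi.single j 1) := by
      intro j
      show fderiv ℝ (fun y : Fin n → ℝ =>
        fderiv ℝ (fun z : Fin n → ℝ => coupledPotential f g n w z ε) y (Pi.single i 1)) x
          (Pi.single j 1) = M (Pi.single j 1)
      exact fderiv_eq_M hM hdiff hx (fun y hy => phi_eq_psibar hsys hw hε hy i) j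
    calc ∑ j : Fin n, |hessEntry f g n w x ε i j|
        = ∑ j : Fin n, |M (Pi.single j 1)| :=
          Finset.sum_congr rfl fun j _ => by rw [key j]
      _ ≤ Kfg f g :=
          (le_of_eq (Finset.sum_congr rfl fun j _ => by rw [happ j])).trans
            (hess_sum_bound hsys hw hε hx i)
  · have h0 : ∀ j : Fin n, hessEntry f g n w x ε i j = 0 := by
      intro j
      show fderiv ℝ (fun y : Fin n → ℝ =>
        fderiv ℝ (fun z : Fin n → ℝ => coupledPotential f g n w z ε) y (Pi.single i 1)) x
          (Pi.single j 1) = 0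
      rw [fderiv_zero_of_not_differentiableAt hdiff]
      simp
    calc ∑ j : Fin n, |hessEntry f g n w x ε i j| = 0 :=
          Finset.sum_eq_zero fun j _ => by rw [h0 j, abs_zero]
      _ ≤ Kfg f g := Kfg_nonneg f g

/-- The Hessian of the coupled potential satisfies `‖U''(x;ε)‖_∞ ≤ K_{f,g}` (maximum
absolute row sum) for all `x ∈ [0,1]^n` and `ε ∈ [0,1]`; the bound `K_{f,g}` does not
depend on `n`, `L` or `w`. -/
theorem coupled_potential_hessian_norm_le (f : ℝ → ℝ → ℝ) (g : ℝ → ℝ)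
    (hsys : ScalarAdmissible f g) (n w : ℕ) (hw : 1 ≤ w) (ε : ℝ) (hε : ε ∈ Icc (0:ℝ) 1)
    (x : Fin n → ℝ) (hx : ∀ i, x i ∈ Icc (0:ℝ) 1) :
    ∀ i : Fin n, ∑ j : Fin n, |hessEntry f g n w x ε i j| ≤ Kfg f g := by
  exact coupled_potential_hessian_norm_le' f g hsys n w hw ε hε x hx
end
end

section
/- For a scalar admissible system (f,g), the one-sided spatially-coupled recursion initialized with all values equal to 1 converges to a fixed point that is non-decreasing in the position index, and its iterates (hence its fixed point) component-wise upper bound the iterates of the basic spatially-coupled recursion initialized with all values equal to 1, at every position i ∈ 𝓛 and every iteration ℓ. -/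
open MeasureTheory Set Filter Topology

noncomputable section

/-- `ε_i = ε` for `i ∈ {−L,…,L}` and `ε_i = 0` otherwise. -/
def epsAt (ε : ℝ) (L : ℕ) (i : ℤ) : ℝ := if -(L:ℤ) ≤ i ∧ i ≤ (L:ℤ) then ε else 0

/-- The spatially-coupled update value
`(1/w) Σ_{k=0}^{w−1} f( (1/w) Σ_{j=0}^{w−1} g(x_{i+j−k}); ε_{i−k} )` at position `i`. -/
def scPhi (f : ℝ → ℝ → ℝ) (g : ℝ → ℝ) (ε : ℝ) (L w : ℕ) (x : ℤ → ℝ) (i : ℤ) : ℝ :=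
  (1 / (w:ℝ)) * ∑ k ∈ Finset.range w,
    f ((1 / (w:ℝ)) * ∑ j ∈ Finset.range w, g (x (i + (j:ℤ) - (k:ℤ))))
      (epsAt ε L (i - (k:ℤ)))

/-- One step of the basic spatially-coupled recursion on `𝓛 = {−L,…,L+w−1}`,
extended by zero outside `𝓛`. -/
def scUpdate (f : ℝ → ℝ → ℝ) (g : ℝ → ℝ) (ε : ℝ) (L w : ℕ) (x : ℤ → ℝ) : ℤ → ℝ :=
  fun i => if -(L:ℤ) ≤ i ∧ i ≤ (L:ℤ) + (w:ℤ) - 1 then scPhi f g ε L w x i else 0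

/-- One step of the one-sided spatially-coupled recursion with `i₀ = ⌊(w−1)/2⌋`:
values at `i < −L` are fixed to `0` and values at `i ≥ i₀` are all set to the
updated value at position `i₀`. -/
def scUpdateOneSided (f : ℝ → ℝ → ℝ) (g : ℝ → ℝ) (ε : ℝ) (L w : ℕ) (x : ℤ → ℝ) : ℤ → ℝ :=
  fun i => if i < -(L:ℤ) then 0
    else if i ≤ (((w - 1) / 2 : ℕ) : ℤ) then scPhi f g ε L w x i
    else scPhi f g ε L w x (((w - 1) / 2 : ℕ) : ℤ)

namespace SCAux

open Set Filter Topology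

variable {f : ℝ → ℝ → ℝ} {g : ℝ → ℝ}

lemma g_mono (hsys : ScalarAdmissible f g) : MonotoneOn g (Icc (0:ℝ) 1) := by
  refine StrictMonoOn.monotoneOn <| strictMonoOn_of_deriv_pos (convex_Icc 0 1)
    hsys.g_smooth.continuousOn ?_
  intro x hx
  rw [interior_Icc] at hx
  exact hsys.g_deriv_pos x hx

lemma f_monoX (hsys : ScalarAdmissible f g) {ε : ℝ} (hε : ε ∈ Icc (0:ℝ) 1) :
    MonotoneOn (fun x => f x ε) (Icc (0:ℝ) 1) := by
  rcases eq_or_lt_of_le hε.1 with h0 | h0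
  · intro a ha b hb _
    simp only [hsys.f_zero_right a ha, hsys.f_zero_right b hb, ← h0, le_refl]
  · intro a ha b hb hab
    rcases eq_or_lt_of_le ha.1 with h | h
    · simpa only [← h, hsys.f_zero_left ε hε] using (hsys.f_mem b hb ε hε).1
    · rcases eq_or_lt_of_le hab with h' | h'
      · rw [h']
      · exact (hsys.f_mono_x ε ⟨h0, hε.2⟩ ⟨h, hab.trans hb.2⟩ ⟨h.trans_le hab, hb.2⟩ h').le

lemma f_monoE (hsys : ScalarAdmissible f g) {x : ℝ} (hx : x ∈ Icc (0:ℝ) 1) :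
    MonotoneOn (fun ε => f x ε) (Icc (0:ℝ) 1) := by
  rcases eq_or_lt_of_le hx.1 with h0 | h0
  · intro a ha b hb _
    simp only [← h0, hsys.f_zero_left a ha, hsys.f_zero_left b hb, le_refl]
  · intro a ha b hb hab
    rcases eq_or_lt_of_le ha.1 with h | h
    · simpa only [← h, hsys.f_zero_right x hx] using (hsys.f_mem x hx b hb).1
    · rcases eq_or_lt_of_le hab with h' | h'
      · rw [h']
      · exact (hsys.f_mono_eps x ⟨h0, hx.2⟩ ⟨h, hab.trans hb.2⟩ ⟨h.trans_le hab, hb.2⟩ h').le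

lemma epsAt_mem {ε : ℝ} (hε : ε ∈ Icc (0:ℝ) 1) (L : ℕ) (m : ℤ) :
    epsAt ε L m ∈ Icc (0:ℝ) 1 := by
  unfold epsAt; split_ifs
  · exact hε
  · exact ⟨le_refl 0, zero_le_one⟩

lemma avg_mem {w : ℕ} (hw : 1 ≤ w) {a : ℕ → ℝ} (ha : ∀ k, k < w → a k ∈ Icc (0:ℝ) 1) :
    (1 / (w:ℝ)) * ∑ k ∈ Finset.range w, a k ∈ Icc (0:ℝ) 1 := by
  have hwpos : (0:ℝ) < w := by exact_mod_cast hw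
  constructor
  · apply mul_nonneg (by positivity)
    exact Finset.sum_nonneg fun k hk => (ha k (Finset.mem_range.1 hk)).1
  · rw [one_div, inv_mul_le_iff₀ hwpos, mul_one]
    calc ∑ k ∈ Finset.range w, a k ≤ ∑ _k ∈ Finset.range w, (1:ℝ) :=
          Finset.sum_le_sum fun k hk => (ha k (Finset.mem_range.1 hk)).2
      _ = w := by simp

/-- Averaging helper. -/
def Ag (g : ℝ → ℝ) (w : ℕ) (x : ℤ → ℝ) (m : ℤ) : ℝ :=
  (1 / (w:ℝ)) * ∑ j ∈ Finset.range w, g (x (m + (j:ℤ)))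

lemma Ag_mem (hsys : ScalarAdmissible f g) {w : ℕ} (hw : 1 ≤ w) {x : ℤ → ℝ}
    (hx : ∀ j, x j ∈ Icc (0:ℝ) 1) (m : ℤ) : Ag g w x m ∈ Icc (0:ℝ) 1 :=
  avg_mem hw fun k _ => hsys.g_mem _ (hx _)

lemma Ag_mono (hsys : ScalarAdmissible f g) {w : ℕ} {x y : ℤ → ℝ}
    (hx : ∀ j, x j ∈ Icc (0:ℝ) 1) (hy : ∀ j, y j ∈ Icc (0:ℝ) 1)
    (hxy : ∀ j, x j ≤ y j) (m : ℤ) : Ag g w x m ≤ Ag g w y m := by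
  apply mul_le_mul_of_nonneg_left _ (by positivity)
  exact Finset.sum_le_sum fun k _ => g_mono hsys (hx _) (hy _) (hxy _)

lemma Ag_mono_m (hsys : ScalarAdmissible f g) {w : ℕ} {x : ℤ → ℝ}
    (hx : ∀ j, x j ∈ Icc (0:ℝ) 1) (hmono : Monotone x) {m m' : ℤ} (h : m ≤ m') :
    Ag g w x m ≤ Ag g w x m' := by
  apply mul_le_mul_of_nonneg_left _ (by positivity)
  exact Finset.sum_le_sum fun k _ => g_mono hsys (hx _) (hx _) (hmono (by omega))

lemma scPhi_eq (f : ℝ → ℝ → ℝ) (g : ℝ → ℝ) (ε : ℝ) (L w : ℕ) (x : ℤ → ℝ) (i : ℤ) :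
    scPhi f g ε L w x i
      = (1 / (w:ℝ)) * ∑ k ∈ Finset.range w,
          f (Ag g w x (i - (k:ℤ))) (epsAt ε L (i - (k:ℤ))) := by
  unfold scPhi Ag
  simp only [show ∀ (j k : ℤ), i + j - k = i - k + j from fun _ _ => by ring]

lemma scPhi_mem (hsys : ScalarAdmissible f g) {ε : ℝ} (hε : ε ∈ Icc (0:ℝ) 1)
    {L w : ℕ} (hw : 1 ≤ w) {x : ℤ → ℝ} (hx : ∀ j, x j ∈ Icc (0:ℝ) 1) (i : ℤ) :
    scPhi f g ε L w x i ∈ Icc (0:ℝ) 1 := by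
  rw [scPhi_eq]
  exact avg_mem hw fun k _ => hsys.f_mem _ (Ag_mem hsys hw hx _) _ (epsAt_mem hε L _)

lemma scPhi_mono (hsys : ScalarAdmissible f g) {ε : ℝ} (hε : ε ∈ Icc (0:ℝ) 1)
    {L w : ℕ} (hw : 1 ≤ w) {x y : ℤ → ℝ}
    (hx : ∀ j, x j ∈ Icc (0:ℝ) 1) (hy : ∀ j, y j ∈ Icc (0:ℝ) 1)
    (hxy : ∀ j, x j ≤ y j) (i : ℤ) :
    scPhi f g ε L w x i ≤ scPhi f g ε L w y i := by
  rw [scPhi_eq, scPhi_eq]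
  apply mul_le_mul_of_nonneg_left _ (by positivity)
  refine Finset.sum_le_sum fun k _ => ?_
  exact f_monoX hsys (epsAt_mem hε L _) (Ag_mem hsys hw hx _) (Ag_mem hsys hw hy _)
    (Ag_mono hsys hx hy hxy _)

end SCAux
namespace SCAux

open Set Filter Topology

variable {f : ℝ → ℝ → ℝ} {g : ℝ → ℝ}

/-- One-step spatial monotonicity of `scPhi` for a monotone configuration,
valid for positions `i+1 ≤ i₀ = ⌊(w−1)/2⌋`. -/
lemma scPhi_step (hsys : ScalarAdmissible f g) {ε : ℝ} (hε : ε ∈ Icc (0:ℝ) 1)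
    {L w : ℕ} (hw : 1 ≤ w) {x : ℤ → ℝ} (hx : ∀ j, x j ∈ Icc (0:ℝ) 1)
    (hmono : Monotone x) {i : ℤ} (hi : i + 1 ≤ (((w - 1) / 2 : ℕ) : ℤ)) :
    scPhi f g ε L w x i ≤ scPhi f g ε L w x (i + 1) := by
  set c : ℤ → ℝ := fun m => f (Ag g w x m) (epsAt ε L m) with hc
  have hcmem : ∀ m, c m ∈ Icc (0:ℝ) 1 := fun m =>
    hsys.f_mem _ (Ag_mem hsys hw hx _) _ (epsAt_mem hε L _)
  rw [scPhi_eq, scPhi_eq]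
  apply mul_le_mul_of_nonneg_left _ (by positivity)
  obtain ⟨w', rfl⟩ : ∃ w', w = w' + 1 := ⟨w - 1, by omega⟩
  have h1 : ∑ k ∈ Finset.range (w' + 1), c (i - (k:ℤ))
      = (∑ k ∈ Finset.range w', c (i - (k:ℤ))) + c (i - (w':ℤ)) :=
    Finset.sum_range_succ _ _
  have h2 : ∑ k ∈ Finset.range (w' + 1), c (i + 1 - (k:ℤ))
      = (∑ k ∈ Finset.range w', c (i - (k:ℤ))) + c (i + 1) := by
    rw [Finset.sum_range_succ' (fun k => c (i + 1 - (k:ℤ)))]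
    congr 1
    · exact Finset.sum_congr rfl fun k _ => by push_cast; ring_nf
    · norm_num
  rw [h1, h2]
  apply add_le_add_right
  -- key: c (i - w') ≤ c (i + 1)
  by_cases hbl : i - (w':ℤ) < -(L:ℤ)
  · have : epsAt ε L (i - (w':ℤ)) = 0 := by unfold epsAt; rw [if_neg]; omega
    have : c (i - (w':ℤ)) = 0 := by
      rw [hc]; simp only [this]
      exact hsys.f_zero_right _ (Ag_mem hsys hw hx _)
    rw [this]; exact (hcmem _).1
  · -- then i+1 ∈ [-L, L], and also i - w' ∈ [-L, L]
    push_neg at hbl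
    have h2i : 2 * (((w' + 1 - 1) / 2 : ℕ) : ℤ) ≤ (w':ℤ) := by
      have : 2 * ((w' + 1 - 1) / 2) ≤ w' := by omega
      exact_mod_cast this
    have hiu : i + 1 ≤ (L:ℤ) := by omega
    have hil : -(L:ℤ) ≤ i + 1 := by omega
    have e1 : epsAt ε L (i + 1) = ε := by unfold epsAt; rw [if_pos ⟨hil, hiu⟩]
    have e2 : epsAt ε L (i - (w':ℤ)) = ε := by
      unfold epsAt; rw [if_pos ⟨hbl, by omega⟩]
    rw [hc]; simp only [e1, e2]
    exact f_monoX hsys hε (Ag_mem hsys hw hx _) (Ag_mem hsys hw hx _)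
      (Ag_mono_m hsys hx hmono (by omega))

lemma epsAt_neg (ε : ℝ) (L : ℕ) (m : ℤ) : epsAt ε L (-m) = epsAt ε L m := by
  unfold epsAt
  congr 1
  simp only [eq_iff_iff]
  omega

lemma Ag_symm {w : ℕ} {x : ℤ → ℝ} (hx : ∀ t, x t = x ((w:ℤ) - 1 - t)) (m : ℤ) :
    Ag g w x m = Ag g w x (-m) := by
  unfold Ag
  congr 1
  rw [← Finset.sum_range_reflect (fun j => g (x (-m + (j:ℤ)))) w]
  refine Finset.sum_congr rfl fun j hj => ?_
  have hj' : j < w := Finset.mem_range.1 hj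
  have : ((w - 1 - j : ℕ) : ℤ) = (w:ℤ) - 1 - j := by omega
  rw [this]
  congr 1
  rw [hx (m + (j:ℤ))]
  ring_nf

lemma scPhi_symm {ε : ℝ} {L w : ℕ} {x : ℤ → ℝ}
    (hx : ∀ t, x t = x ((w:ℤ) - 1 - t)) (i : ℤ) :
    scPhi f g ε L w x ((w:ℤ) - 1 - i) = scPhi f g ε L w x i := by
  rw [scPhi_eq, scPhi_eq]
  congr 1
  rw [← Finset.sum_range_reflect
    (fun k => f (Ag g w x ((w:ℤ) - 1 - i - (k:ℤ))) (epsAt ε L ((w:ℤ) - 1 - i - (k:ℤ)))) w]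
  refine Finset.sum_congr rfl fun k hk => ?_
  have hk' : k < w := Finset.mem_range.1 hk
  have hcast : ((w - 1 - k : ℕ) : ℤ) = (w:ℤ) - 1 - k := by omega
  rw [hcast]
  have harg : (w:ℤ) - 1 - i - ((w:ℤ) - 1 - k) = -(i - k) := by ring
  rw [harg, epsAt_neg, ← Ag_symm hx (i - (k:ℤ))]

end SCAux
namespace SCAux

open Set Filter Topology

variable {f : ℝ → ℝ → ℝ} {g : ℝ → ℝ}

lemma scPhi_tendsto (hsys : ScalarAdmissible f g) {ε : ℝ} (hε : ε ∈ Icc (0:ℝ) 1)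
    {L w : ℕ} (hw : 1 ≤ w) {Z : ℕ → ℤ → ℝ} {z : ℤ → ℝ}
    (hZ : ∀ ℓ j, Z ℓ j ∈ Icc (0:ℝ) 1) (hz : ∀ j, z j ∈ Icc (0:ℝ) 1)
    (hlim : ∀ j, Tendsto (fun ℓ => Z ℓ j) atTop (𝓝 (z j))) (i : ℤ) :
    Tendsto (fun ℓ => scPhi f g ε L w (Z ℓ) i) atTop (𝓝 (scPhi f g ε L w z i)) := by
  simp only [scPhi_eq]
  apply Tendsto.const_mul
  apply tendsto_finset_sum
  intro k _
  set m : ℤ := i - (k:ℤ)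
  have hAg : Tendsto (fun ℓ => Ag g w (Z ℓ) m) atTop (𝓝 (Ag g w z m)) := by
    unfold Ag
    apply Tendsto.const_mul
    apply tendsto_finset_sum
    intro j _
    have hgc : ContinuousWithinAt g (Icc (0:ℝ) 1) (z (m + (j:ℤ))) :=
      hsys.g_smooth.continuousOn _ (hz _)
    exact hgc.tendsto.comp
      (tendsto_nhdsWithin_of_tendsto_nhds_of_eventually_within _ (hlim _)
        (Eventually.of_forall fun ℓ => hZ ℓ _))
  have hfc : ContinuousWithinAt (fun p : ℝ × ℝ => f p.1 p.2)
      (Icc (0:ℝ) 1 ×ˢ Icc (0:ℝ) 1) (Ag g w z m, epsAt ε L m) :=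
    hsys.f_smooth.continuousOn _ (mk_mem_prod (Ag_mem hsys hw hz _) (epsAt_mem hε L _))
  have : Tendsto (fun ℓ => (Ag g w (Z ℓ) m, epsAt ε L m)) atTop
      (𝓝[Icc (0:ℝ) 1 ×ˢ Icc (0:ℝ) 1] (Ag g w z m, epsAt ε L m)) := by
    apply tendsto_nhdsWithin_of_tendsto_nhds_of_eventually_within
    · exact hAg.prodMk_nhds tendsto_const_nhds
    · exact Eventually.of_forall fun ℓ =>
        mk_mem_prod (Ag_mem hsys hw (hZ ℓ) _) (epsAt_mem hε L _)
  exact hfc.tendsto.comp this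

end SCAux
namespace SCAux

open Set Filter Topology

variable {f : ℝ → ℝ → ℝ} {g : ℝ → ℝ}

lemma oneSided_mem (hsys : ScalarAdmissible f g) {ε : ℝ} (hε : ε ∈ Icc (0:ℝ) 1)
    {L w : ℕ} (hw : 1 ≤ w) {x : ℤ → ℝ} (hx : ∀ j, x j ∈ Icc (0:ℝ) 1) (i : ℤ) :
    scUpdateOneSided f g ε L w x i ∈ Icc (0:ℝ) 1 := by
  unfold scUpdateOneSided
  split_ifs
  · exact ⟨le_refl 0, zero_le_one⟩
  · exact scPhi_mem hsys hε hw hx _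
  · exact scPhi_mem hsys hε hw hx _

lemma oneSided_monoConfig (hsys : ScalarAdmissible f g) {ε : ℝ} (hε : ε ∈ Icc (0:ℝ) 1)
    {L w : ℕ} (hw : 1 ≤ w) {x y : ℤ → ℝ}
    (hx : ∀ j, x j ∈ Icc (0:ℝ) 1) (hy : ∀ j, y j ∈ Icc (0:ℝ) 1)
    (hxy : ∀ j, x j ≤ y j) (i : ℤ) :
    scUpdateOneSided f g ε L w x i ≤ scUpdateOneSided f g ε L w y i := by
  unfold scUpdateOneSided
  split_ifs
  · exact le_refl 0
  · exact scPhi_mono hsys hε hw hx hy hxy _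
  · exact scPhi_mono hsys hε hw hx hy hxy _

lemma oneSided_monotone (hsys : ScalarAdmissible f g) {ε : ℝ} (hε : ε ∈ Icc (0:ℝ) 1)
    {L w : ℕ} (hw : 1 ≤ w) (hL : 1 ≤ L) {x : ℤ → ℝ}
    (hx : ∀ j, x j ∈ Icc (0:ℝ) 1) (hmono : Monotone x) :
    Monotone (scUpdateOneSided f g ε L w x) := by
  apply monotone_int_of_le_succ
  intro i
  unfold scUpdateOneSided
  have hi0nn : (0:ℤ) ≤ (((w - 1) / 2 : ℕ) : ℤ) := Int.natCast_nonneg _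
  by_cases h1 : i + 1 < -(L:ℤ)
  · rw [if_pos (by omega), if_pos h1]
  · rw [if_neg h1]
    by_cases h0 : i < -(L:ℤ)
    · rw [if_pos h0]
      split_ifs
      · exact (scPhi_mem hsys hε hw hx _).1
      · exact (scPhi_mem hsys hε hw hx _).1
    · rw [if_neg h0]
      by_cases h2 : i + 1 ≤ (((w - 1) / 2 : ℕ) : ℤ)
      · rw [if_pos h2, if_pos (by omega)]
        exact scPhi_step hsys hε hw hx hmono h2
      · rw [if_neg h2]
        by_cases h3 : i ≤ (((w - 1) / 2 : ℕ) : ℤ)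
        · rw [if_pos h3]
          have : i = (((w - 1) / 2 : ℕ) : ℤ) := by omega
          rw [this]
        · rw [if_neg h3]

lemma scUpdate_symm {ε : ℝ} {L w : ℕ} {x : ℤ → ℝ}
    (hx : ∀ t, x t = x ((w:ℤ) - 1 - t)) (i : ℤ) :
    scUpdate f g ε L w x i = scUpdate f g ε L w x ((w:ℤ) - 1 - i) := by
  unfold scUpdate
  by_cases h : -(L:ℤ) ≤ i ∧ i ≤ (L:ℤ) + (w:ℤ) - 1
  · rw [if_pos h, if_pos (by omega), scPhi_symm hx]
  · rw [if_neg h, if_neg (by omega)]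

lemma dominate_step (hsys : ScalarAdmissible f g) {ε : ℝ} (hε : ε ∈ Icc (0:ℝ) 1)
    {L w : ℕ} (hw : 1 ≤ w) (hL : 1 ≤ L) {x y : ℤ → ℝ}
    (hx : ∀ j, x j ∈ Icc (0:ℝ) 1) (hy : ∀ j, y j ∈ Icc (0:ℝ) 1)
    (hxy : ∀ j, x j ≤ y j) (hxsymm : ∀ t, x t = x ((w:ℤ) - 1 - t))
    (hymono : Monotone y) (i : ℤ) :
    scUpdate f g ε L w x i ≤ scUpdateOneSided f g ε L w y i := by
  have h2i0 : (w:ℤ) - 2 ≤ 2 * (((w - 1) / 2 : ℕ) : ℤ) := by omega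
  have hi0w : (((w - 1) / 2 : ℕ) : ℤ) ≤ (w:ℤ) - 1 := by omega
  have hC : ∀ i : ℤ, i ≤ (((w - 1) / 2 : ℕ) : ℤ) →
      scUpdate f g ε L w x i ≤ scUpdateOneSided f g ε L w y i := by
    intro i hi
    unfold scUpdate scUpdateOneSided
    by_cases h0 : i < -(L:ℤ)
    · rw [if_neg (by omega), if_pos h0]
    · rw [if_pos (by omega), if_neg h0, if_pos hi]
      exact scPhi_mono hsys hε hw hx hy hxy i
  by_cases hi : i ≤ (((w - 1) / 2 : ℕ) : ℤ)
  · exact hC i hi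
  · calc scUpdate f g ε L w x i = scUpdate f g ε L w x ((w:ℤ) - 1 - i) := by
          rw [← scUpdate_symm hxsymm]
      _ ≤ scUpdateOneSided f g ε L w y ((w:ℤ) - 1 - i) := hC _ (by omega)
      _ ≤ scUpdateOneSided f g ε L w y i :=
          oneSided_monotone hsys hε hw hL hy hymono (by omega)

end SCAux
open SCAux in
/-- The one-sided SC recursion initialized with all (non-fixed) values equal to `1`
converges to a fixed point that is non-decreasing in the position index, and its
iterates component-wise upper bound the iterates of the basic SC recursion
initialized with all values equal to `1`, at every position `i ∈ 𝓛` and iteration `ℓ`. -/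
theorem one_sided_sc_bounds_basic_sc (f : ℝ → ℝ → ℝ) (g : ℝ → ℝ)
    (hsys : ScalarAdmissible f g) (ε : ℝ) (hε : ε ∈ Icc (0:ℝ) 1)
    (w L : ℕ) (hw : 1 ≤ w) (hL : 1 ≤ L) (X Y : ℕ → ℤ → ℝ)
    (hX0 : ∀ i : ℤ, X 0 i = if -(L:ℤ) ≤ i ∧ i ≤ (L:ℤ) + (w:ℤ) - 1 then 1 else 0)
    (hXs : ∀ ℓ : ℕ, X (ℓ + 1) = scUpdate f g ε L w (X ℓ))
    (hY0 : ∀ i : ℤ, Y 0 i = if i < -(L:ℤ) then 0 else 1)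
    (hYs : ∀ ℓ : ℕ, Y (ℓ + 1) = scUpdateOneSided f g ε L w (Y ℓ)) :
    (∀ ℓ : ℕ, ∀ i : ℤ, -(L:ℤ) ≤ i → i ≤ (L:ℤ) + (w:ℤ) - 1 → X ℓ i ≤ Y ℓ i) ∧
      ∃ y : ℤ → ℝ, (∀ i : ℤ, Tendsto (fun ℓ => Y ℓ i) atTop (𝓝 (y i))) ∧
        scUpdateOneSided f g ε L w y = y ∧ (∀ i j : ℤ, i ≤ j → y i ≤ y j) := by
  -- basic facts about the iterates
  have hYmem : ∀ ℓ i, Y ℓ i ∈ Icc (0:ℝ) 1 := by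
    intro ℓ
    induction ℓ with
    | zero =>
      intro i; rw [hY0]
      split_ifs
      · exact ⟨le_refl 0, zero_le_one⟩
      · exact ⟨zero_le_one, le_refl 1⟩
    | succ n ih =>
      intro i; rw [hYs n]
      exact oneSided_mem hsys hε hw ih i
  have hXmem : ∀ ℓ i, X ℓ i ∈ Icc (0:ℝ) 1 := by
    intro ℓ
    induction ℓ with
    | zero =>
      intro i; rw [hX0]
      split_ifs
      · exact ⟨zero_le_one, le_refl 1⟩
      · exact ⟨le_refl 0, zero_le_one⟩
    | succ n ih =>
      intro i; rw [hXs n]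
      unfold scUpdate
      split_ifs
      · exact scPhi_mem hsys hε hw ih i
      · exact ⟨le_refl 0, zero_le_one⟩
  have hYmono : ∀ ℓ, Monotone (Y ℓ) := by
    intro ℓ
    induction ℓ with
    | zero =>
      apply monotone_int_of_le_succ
      intro i
      rw [hY0 i, hY0 (i + 1)]
      split_ifs with h h' <;> norm_num <;> omega
    | succ n ih =>
      rw [hYs n]
      exact oneSided_monotone hsys hε hw hL (hYmem n) ih
  have hXsymm : ∀ ℓ, ∀ t, X ℓ t = X ℓ ((w:ℤ) - 1 - t) := by
    intro ℓ
    induction ℓ with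
    | zero =>
      intro t
      rw [hX0 t, hX0 ((w:ℤ) - 1 - t)]
      have : (-(L:ℤ) ≤ t ∧ t ≤ (L:ℤ) + (w:ℤ) - 1) ↔
          (-(L:ℤ) ≤ (w:ℤ) - 1 - t ∧ (w:ℤ) - 1 - t ≤ (L:ℤ) + (w:ℤ) - 1) := by omega
      simp only [this]
    | succ n ih =>
      intro t
      rw [hXs n]
      exact scUpdate_symm ih t
  have hXY : ∀ ℓ, ∀ i, X ℓ i ≤ Y ℓ i := by
    intro ℓ
    induction ℓ with
    | zero =>
      intro i
      rw [hX0, hY0]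
      split_ifs with h h'
      · exact absurd h.1 (by omega)
      · norm_num
      · norm_num
      · norm_num
    | succ n ih =>
      intro i
      rw [hXs n, hYs n]
      exact dominate_step hsys hε hw hL (hXmem n) (hYmem n) ih (hXsymm n) (hYmono n) i
  have hYanti : ∀ ℓ i, Y (ℓ + 1) i ≤ Y ℓ i := by
    intro ℓ
    induction ℓ with
    | zero =>
      intro i
      rw [hY0]
      split_ifs with h
      · rw [hYs 0]
        unfold scUpdateOneSided
        rw [if_pos h]
      · exact (hYmem 1 i).2
    | succ n ih =>
      intro i
      calc Y (n + 1 + 1) i = scUpdateOneSided f g ε L w (Y (n + 1)) i :=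
            congrFun (hYs (n + 1)) i
        _ ≤ scUpdateOneSided f g ε L w (Y n) i :=
            oneSided_monoConfig hsys hε hw (hYmem (n + 1)) (hYmem n) ih i
        _ = Y (n + 1) i := (congrFun (hYs n) i).symm
  -- the limit
  have hanti : ∀ i, Antitone fun ℓ => Y ℓ i := fun i =>
    antitone_nat_of_succ_le fun ℓ => hYanti ℓ i
  have hbdd : ∀ i, BddBelow (Set.range fun ℓ => Y ℓ i) := by
    intro i
    refine ⟨0, ?_⟩
    rintro v ⟨ℓ, rfl⟩
    exact (hYmem ℓ i).1
  set y : ℤ → ℝ := fun i => ⨅ ℓ, Y ℓ i with hy_def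
  have hy : ∀ i, Tendsto (fun ℓ => Y ℓ i) atTop (𝓝 (y i)) := fun i =>
    tendsto_atTop_ciInf (hanti i) (hbdd i)
  have hymem : ∀ i, y i ∈ Icc (0:ℝ) 1 := fun i =>
    isClosed_Icc.mem_of_tendsto (hy i) (Eventually.of_forall fun ℓ => hYmem ℓ i)
  have hymono : ∀ i j : ℤ, i ≤ j → y i ≤ y j := fun i j hij =>
    le_of_tendsto_of_tendsto' (hy i) (hy j) fun ℓ => hYmono ℓ hij
  have hshift : ∀ i, Tendsto (fun ℓ => Y (ℓ + 1) i) atTop (𝓝 (y i)) := fun i =>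
    (hy i).comp (tendsto_add_atTop_nat 1)
  have hfix : scUpdateOneSided f g ε L w y = y := by
    funext i
    have hPhi : ∀ m : ℤ, Tendsto (fun ℓ => scPhi f g ε L w (Y ℓ) m) atTop
        (𝓝 (scPhi f g ε L w y m)) := fun m =>
      scPhi_tendsto hsys hε hw hYmem hymem hy m
    have h2 : Tendsto (fun ℓ => scUpdateOneSided f g ε L w (Y ℓ) i) atTop
        (𝓝 (scUpdateOneSided f g ε L w y i)) := by
      unfold scUpdateOneSided
      split_ifs
      · exact tendsto_const_nhds
      · exact hPhi i
      · exact hPhi _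
    have h3 : Tendsto (fun ℓ => scUpdateOneSided f g ε L w (Y ℓ) i) atTop (𝓝 (y i)) := by
      have : (fun ℓ => scUpdateOneSided f g ε L w (Y ℓ) i) = fun ℓ => Y (ℓ + 1) i := by
        funext ℓ; rw [hYs ℓ]
      rw [this]
      exact hshift i
    exact tendsto_nhds_unique h2 h3
  exact ⟨fun ℓ i _ _ => hXY ℓ i, y, hy, hfix, hymono⟩
end
end

section
/- For the LDPC(λ,ρ) density-evolution system on the BEC, the single-system potential satisfies U(x;ε) = (1/L'(1))·(−P(x) + (ε(x) − ε)·L(1−ρ(1−x))) for all x ∈ (0,1] and ε ∈ [0,1]; equivalently, U(x;ε) = −x·ρ(1−x) + (1−R(1−x))/R'(1) − ε·L(1−ρ(1−x))/L'(1). -/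
open MeasureTheory Set Filter Topology Polynomial

noncomputable section

/-- `L(x) = ∫₀ˣ λ(y) dy / ∫₀¹ λ(y) dy` (normalized node-perspective degree distribution). -/
def Lnorm (lam : Polynomial ℝ) (x : ℝ) : ℝ :=
  (∫ y in (0:ℝ)..x, lam.eval y) / ∫ y in (0:ℝ)..1, lam.eval y

/-- `f(x;ε) = ε λ(x)` for the LDPC(λ,ρ) density evolution on the BEC. -/
def ldpcF (lam : Polynomial ℝ) : ℝ → ℝ → ℝ := fun x ε => ε * lam.eval x

/-- `g(x) = 1 − ρ(1−x)` for the LDPC(λ,ρ) density evolution on the BEC. -/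
def ldpcG (rho : Polynomial ℝ) : ℝ → ℝ := fun x => 1 - rho.eval (1 - x)

/-- `ε(x) = x / λ(1 − ρ(1−x))`. -/
def epsRoot (lam rho : Polynomial ℝ) (x : ℝ) : ℝ := x / lam.eval (1 - rho.eval (1 - x))

/-- The trial entropy
`P(x) = ε(x) L(1−ρ(1−x)) + L'(1) x ρ(1−x) − (L'(1)/R'(1)) (1 − R(1−x))`. -/
def trialEntropy (lam rho : Polynomial ℝ) (x : ℝ) : ℝ :=
  epsRoot lam rho x * Lnorm lam (1 - rho.eval (1 - x)) +
    deriv (Lnorm lam) 1 * x * rho.eval (1 - x) -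
    (deriv (Lnorm lam) 1 / deriv (Lnorm rho) 1) * (1 - Lnorm rho (1 - x))


private lemma poly_eval_pos (p : Polynomial ℝ) (hc : ∀ k, 0 ≤ p.coeff k)
    (h1 : p.eval 1 = 1) {t : ℝ} (ht : 0 < t) : 0 < p.eval t := by
  have hne : p ≠ 0 := by intro h; simp [h] at h1
  obtain ⟨k, hk⟩ := Polynomial.nonempty_support_iff.mpr hne
  rw [Polynomial.eval_eq_sum, Polynomial.sum_def]
  refine Finset.sum_pos' (fun i _ => mul_nonneg (hc i) (pow_nonneg ht.le i)) ⟨k, hk, ?_⟩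
  exact mul_pos (lt_of_le_of_ne (hc k) (Ne.symm (Polynomial.mem_support_iff.mp hk)))
    (pow_pos ht k)

private lemma poly_int_pos (p : Polynomial ℝ) (hc : ∀ k, 0 ≤ p.coeff k)
    (h1 : p.eval 1 = 1) : 0 < ∫ y in (0:ℝ)..1, p.eval y :=
  intervalIntegral.intervalIntegral_pos_of_pos_on
    (p.continuous.intervalIntegrable _ _)
    (fun x hx => poly_eval_pos p hc h1 hx.1) one_pos

private lemma hasDerivAt_polyInt (p : Polynomial ℝ) (y : ℝ) :
    HasDerivAt (fun u => ∫ t in (0:ℝ)..u, p.eval t) (p.eval y) y :=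
  intervalIntegral.integral_hasDerivAt_right
    (p.continuous.intervalIntegrable _ _)
    (p.continuous.stronglyMeasurableAtFilter _ _)
    p.continuous.continuousAt

private lemma deriv_Lnorm (p : Polynomial ℝ) :
    deriv (Lnorm p) 1 = p.eval 1 / ∫ y in (0:ℝ)..1, p.eval y := by
  have h : HasDerivAt (Lnorm p) (p.eval 1 / ∫ y in (0:ℝ)..1, p.eval y) 1 :=
    (hasDerivAt_polyInt p 1).div_const _
  exact h.deriv

private lemma hasDerivAt_ldpcG (rho : Polynomial ℝ) (z : ℝ) :
    HasDerivAt (ldpcG rho) ((derivative rho).eval (1 - z)) z := by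
  have h1z : HasDerivAt (fun z : ℝ => 1 - z) (-1) z := (hasDerivAt_id z).const_sub 1
  have hrhoz : HasDerivAt (fun z : ℝ => rho.eval (1 - z))
      ((derivative rho).eval (1 - z) * (-1)) z :=
    (rho.hasDerivAt (1 - z)).comp z h1z
  have h := hrhoz.const_sub 1
  unfold ldpcG
  rw [show (derivative rho).eval (1 - z) = -((derivative rho).eval (1 - z) * (-1)) by ring]
  exact h

/-- For the LDPC(λ,ρ) density-evolution system on the BEC, the single-system potential
satisfies `U(x;ε) = (1/L'(1)) (−P(x) + (ε(x) − ε) L(1−ρ(1−x)))` for all `x ∈ (0,1]`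
and `ε ∈ [0,1]`; equivalently,
`U(x;ε) = −x ρ(1−x) + (1−R(1−x))/R'(1) − ε L(1−ρ(1−x))/L'(1)`. -/
theorem ldpc_potential_closed_form (lam rho : Polynomial ℝ)
    (hlam_coeff : ∀ k, 0 ≤ lam.coeff k) (hrho_coeff : ∀ k, 0 ≤ rho.coeff k)
    (hlam1 : lam.eval 1 = 1) (hrho1 : rho.eval 1 = 1) (hlam0 : lam.eval 0 = 0) :
    ∀ x ∈ Ioc (0:ℝ) 1, ∀ ε ∈ Icc (0:ℝ) 1,
      singlePotential (ldpcF lam) (ldpcG rho) x ε =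
        (1 / deriv (Lnorm lam) 1) *
          (-(trialEntropy lam rho x) +
            (epsRoot lam rho x - ε) * Lnorm lam (1 - rho.eval (1 - x))) ∧
      singlePotential (ldpcF lam) (ldpcG rho) x ε =
        -x * rho.eval (1 - x) + (1 - Lnorm rho (1 - x)) / deriv (Lnorm rho) 1 -
          ε * Lnorm lam (1 - rho.eval (1 - x)) / deriv (Lnorm lam) 1 := by
  intro x hx ε hε
  have hJ1 : 0 < ∫ y in (0:ℝ)..1, lam.eval y := poly_int_pos lam hlam_coeff hlam1
  have hI1 : 0 < ∫ y in (0:ℝ)..1, rho.eval y := poly_int_pos rho hrho_coeff hrho1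
  have hderivg : deriv (ldpcG rho) = fun z => (derivative rho).eval (1 - z) :=
    funext fun z => (hasDerivAt_ldpcG rho z).deriv
  have hH' : ∀ z : ℝ, HasDerivAt
      (fun z => -(z * rho.eval (1 - z)) +
        ((∫ t in (0:ℝ)..1, rho.eval t) - ∫ t in (0:ℝ)..(1 - z), rho.eval t) -
        ε * ∫ t in (0:ℝ)..(ldpcG rho z), lam.eval t)
      ((z - ldpcF lam (ldpcG rho z) ε) * deriv (ldpcG rho) z) z := by
    intro z
    have h1z : HasDerivAt (fun z : ℝ => 1 - z) (-1) z := (hasDerivAt_id z).const_sub 1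
    have hrhoz : HasDerivAt (fun z : ℝ => rho.eval (1 - z))
        ((derivative rho).eval (1 - z) * (-1)) z :=
      (rho.hasDerivAt (1 - z)).comp z h1z
    have hA : HasDerivAt (fun z : ℝ => z * rho.eval (1 - z))
        (1 * rho.eval (1 - z) + z * ((derivative rho).eval (1 - z) * (-1))) z :=
      (hasDerivAt_id z).mul hrhoz
    have hB : HasDerivAt
        (fun z : ℝ => (∫ t in (0:ℝ)..1, rho.eval t) - ∫ t in (0:ℝ)..(1 - z), rho.eval t)
        (-(rho.eval (1 - z) * (-1))) z :=
      ((hasDerivAt_polyInt rho (1 - z)).comp z h1z).const_sub _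
    have hC : HasDerivAt (fun z : ℝ => ε * ∫ t in (0:ℝ)..(ldpcG rho z), lam.eval t)
        (ε * (lam.eval (ldpcG rho z) * (derivative rho).eval (1 - z))) z :=
      ((hasDerivAt_polyInt lam (ldpcG rho z)).comp z (hasDerivAt_ldpcG rho z)).const_mul ε
    have h := (hA.neg.add hB).sub hC
    rw [(hasDerivAt_ldpcG rho z).deriv]
    convert h using 1 <;> first | rfl | (simp only [ldpcF]; ring)
  have hUeq : singlePotential (ldpcF lam) (ldpcG rho) x ε =
      -(x * rho.eval (1 - x)) +
        ((∫ t in (0:ℝ)..1, rho.eval t) - ∫ t in (0:ℝ)..(1 - x), rho.eval t) -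
        ε * ∫ t in (0:ℝ)..(ldpcG rho x), lam.eval t := by
    have hint : IntervalIntegrable
        (fun z => (z - ldpcF lam (ldpcG rho z) ε) * deriv (ldpcG rho) z)
        MeasureTheory.volume 0 x := by
      rw [hderivg]
      apply Continuous.intervalIntegrable
      unfold ldpcF ldpcG
      fun_prop
    rw [singlePotential,
      intervalIntegral.integral_eq_sub_of_hasDerivAt (fun z _ => hH' z) hint]
    have hg0 : ldpcG rho 0 = 0 := by simp [ldpcG, hrho1]
    simp [hg0]
  have hgx : ldpcG rho x = 1 - rho.eval (1 - x) := rfl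
  have h2 : singlePotential (ldpcF lam) (ldpcG rho) x ε =
      -x * rho.eval (1 - x) + (1 - Lnorm rho (1 - x)) / deriv (Lnorm rho) 1 -
        ε * Lnorm lam (1 - rho.eval (1 - x)) / deriv (Lnorm lam) 1 := by
    rw [hUeq, hgx, deriv_Lnorm, deriv_Lnorm, hrho1, hlam1]
    simp only [Lnorm]
    field_simp
  refine ⟨?_, h2⟩
  rw [h2, trialEntropy, deriv_Lnorm, deriv_Lnorm, hrho1, hlam1]
  simp only [Lnorm]
  field_simp
  ring
end
end

section
/- For integers n and t with 2 ≤ t ≤ ⌊(n−1)/2⌋, the function P(x) = −x·g(x) + 2∫₀ˣ g(z)dz, where g(x) = Σ_{e=t}^{n−1} C(n−1,e) x^e (1−x)^{n−1−e}, has exactly one root x̄ in the interval (0,1]. -/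
open MeasureTheory Set Filter Topology

noncomputable section

/-- `g(x) = Σ_{e=t}^{n−1} C(n−1,e) xᵉ (1−x)^{n−1−e}`, the check-node update of the GLDPC
density evolution (degree-2 bits, length-`n` BCH constraints correcting `t` erasures). -/
def gldpcG (n t : ℕ) (x : ℝ) : ℝ :=
  ∑ e ∈ Finset.Icc t (n - 1), ((n - 1).choose e : ℝ) * x ^ e * (1 - x) ^ (n - 1 - e)

/-- `P(x) = −x g(x) + 2 ∫₀ˣ g(z) dz`. -/
def gldpcP (n t : ℕ) (x : ℝ) : ℝ :=
  -x * gldpcG n t x + 2 * ∫ z in (0:ℝ)..x, gldpcG n t z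

namespace GldpcAux

def G (m t : ℕ) (x : ℝ) : ℝ :=
  ∑ e ∈ Finset.Icc t m, (m.choose e : ℝ) * x ^ e * (1 - x) ^ (m - e)

lemma sum_full (m : ℕ) (z : ℝ) :
    ∑ e ∈ Finset.Icc 0 m, (m.choose e : ℝ) * z ^ e * (1 - z) ^ (m - e) = 1 := by
  have h := add_pow z (1 - z) m
  simp only [add_sub_cancel, one_pow] at h
  rw [show Finset.Icc 0 m = Finset.range (m+1) by
    rw [← Finset.Ico_add_one_right_eq_Icc, Nat.Ico_zero_eq_range]]
  refine Eq.trans ?_ h.symm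
  exact Finset.sum_congr rfl fun e _ => by ring

lemma G_reflect (m t : ℕ) (htm : t ≤ m) (z : ℝ) :
    G m t (1 - z) = ∑ e ∈ Finset.Icc 0 (m - t), (m.choose e : ℝ) * z ^ e * (1 - z) ^ (m - e) := by
  unfold G
  rw [show (1 : ℝ) - (1 - z) = z by ring]
  refine Finset.sum_nbij' (i := fun e => m - e) (j := fun e => m - e) ?_ ?_ ?_ ?_ ?_
  all_goals intro a ha; rw [Finset.mem_Icc] at ha; try dsimp only
  · rw [Finset.mem_Icc]; omega
  · rw [Finset.mem_Icc]; omega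
  · omega
  · omega
  · rw [Nat.choose_symm ha.2]
    have : m - (m - a) = a := by omega
    rw [this]
    ring

lemma G_add (m t : ℕ) (ht : 1 ≤ t) (h2t : t + t ≤ m) (z : ℝ) :
    G m t z + G m t (1 - z)
      = 1 + ∑ e ∈ Finset.Icc t (m - t), (m.choose e : ℝ) * z ^ e * (1 - z) ^ (m - e) := by
  set a : ℕ → ℝ := fun e => (m.choose e : ℝ) * z ^ e * (1 - z) ^ (m - e) with ha
  have hrefl := G_reflect m t (by omega) z
  have hsplit : ∑ e ∈ Finset.Icc 0 (m - t), a e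
      = (∑ e ∈ Finset.Ico 0 t, a e) + ∑ e ∈ Finset.Icc t (m - t), a e := by
    rw [← Finset.Ico_add_one_right_eq_Icc, ← Finset.Ico_add_one_right_eq_Icc]
    rw [Finset.sum_Ico_consecutive _ (by omega) (by omega)]
  have hfull : (∑ e ∈ Finset.Ico 0 t, a e) + ∑ e ∈ Finset.Icc t m, a e = 1 := by
    rw [← Finset.Ico_add_one_right_eq_Icc]
    rw [Finset.sum_Ico_consecutive _ (by omega) (by omega)]
    rw [Finset.Ico_add_one_right_eq_Icc]
    exact sum_full m z
  have hG : G m t z = ∑ e ∈ Finset.Icc t m, a e := rfl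
  rw [hG, hrefl]
  rw [show (∑ e ∈ Finset.Icc 0 (m - t), (m.choose e : ℝ) * z ^ e * (1 - z) ^ (m - e))
      = ∑ e ∈ Finset.Icc 0 (m - t), a e from rfl, hsplit]
  linarith [hfull]

lemma G_one (m t : ℕ) (htm : t ≤ m) : G m t 1 = 1 := by
  unfold G
  rw [Finset.sum_eq_single m]
  · simp
  · intro e he hne
    rw [Finset.mem_Icc] at he
    rw [show (1:ℝ) - 1 = 0 by ring, zero_pow (by omega)]
    ring
  · intro h
    exact absurd (Finset.mem_Icc.mpr ⟨htm, le_refl m⟩) h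

lemma continuous_G (m t : ℕ) : Continuous (G m t) := by
  unfold G
  exact continuous_finset_sum _ fun e _ => by fun_prop

def PP (m t : ℕ) (x : ℝ) : ℝ := -x * G m t x + 2 * ∫ z in (0:ℝ)..x, G m t z

lemma PP_one_pos (m t : ℕ) (ht : 1 ≤ t) (h2t : t + t ≤ m) : 0 < PP m t 1 := by
  have hc : Continuous fun z => G m t z + G m t (1 - z) - 1 := by
    have := continuous_G m t
    fun_prop
  have hrefl : (∫ z in (0:ℝ)..1, G m t (1 - z)) = ∫ z in (0:ℝ)..1, G m t z := by
    simpa using intervalIntegral.integral_comp_sub_left (G m t) 1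
  have key : 0 < ∫ z in (0:ℝ)..1, (G m t z + G m t (1 - z) - 1) := by
    apply intervalIntegral.intervalIntegral_pos_of_pos_on (hc.intervalIntegrable 0 1) _ one_pos
    intro z hz
    rw [G_add m t ht h2t z]
    have : 0 < ∑ e ∈ Finset.Icc t (m - t), (m.choose e : ℝ) * z ^ e * (1 - z) ^ (m - e) := by
      apply Finset.sum_pos
      · intro e he
        rw [Finset.mem_Icc] at he
        have he' : e ≤ m := by omega
        have hC : (0:ℝ) < (m.choose e : ℝ) := by exact_mod_cast Nat.choose_pos he'
        exact mul_pos (mul_pos hC (pow_pos hz.1 e)) (pow_pos (by linarith [hz.2]) _)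
      · exact Finset.nonempty_Icc.mpr (by omega)
    linarith
  have hsplit : (∫ z in (0:ℝ)..1, (G m t z + G m t (1 - z) - 1))
      = (∫ z in (0:ℝ)..1, G m t z) + (∫ z in (0:ℝ)..1, G m t (1 - z)) - 1 := by
    have hi1 : IntervalIntegrable (G m t) volume 0 1 := (continuous_G m t).intervalIntegrable _ _
    have hi2 : IntervalIntegrable (fun z => G m t (1 - z)) volume 0 1 :=
      (((continuous_G m t).comp (by fun_prop : Continuous fun z : ℝ => 1 - z))).intervalIntegrable _ _
    rw [intervalIntegral.integral_sub (hi1.add hi2) intervalIntegrable_const]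
    rw [intervalIntegral.integral_add hi1 hi2]
    simp
  rw [hsplit, hrefl] at key
  unfold PP
  rw [G_one m t (by omega)]
  linarith

def D (m t : ℕ) (x : ℝ) : ℝ :=
  G m t x - (t : ℝ) * (m.choose t : ℝ) * x ^ t * (1 - x) ^ (m - t)

lemma D_neg_near_zero (m t : ℕ) (ht : 2 ≤ t) (h2t : t + t ≤ m) (x : ℝ)
    (hx0 : 0 < x) (hxs : x * (2 ^ m + m + 1) ≤ 1) : D m t x < 0 := by
  have hK : (1:ℝ) ≤ 2 ^ m + m + 1 := by
    have h0 : (0:ℝ) ≤ 2 ^ m + m := by positivity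
    linarith
  have hx1 : x ≤ 1 := by nlinarith
  have hx1' : x < 1 := by nlinarith [pow_pos (by norm_num : (0:ℝ) < 2) m]
  set c : ℝ := (m.choose t : ℝ) with hc
  -- split off the e = t term
  have hsplit : G m t x = c * x ^ t * (1 - x) ^ (m - t)
      + ∑ e ∈ Finset.Icc (t+1) m, (m.choose e : ℝ) * x ^ e * (1 - x) ^ (m - e) := by
    unfold G
    rw [← Finset.Ico_add_one_right_eq_Icc, ← Finset.sum_Ico_consecutive _ (by omega : t ≤ t + 1) (by omega : t + 1 ≤ m + 1)]
    rw [Nat.Ico_succ_singleton, Finset.sum_singleton, Finset.Ico_add_one_right_eq_Icc]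
  set T : ℝ := ∑ e ∈ Finset.Icc (t+1) m, (m.choose e : ℝ) * x ^ e * (1 - x) ^ (m - e) with hT
  have hTbound : T ≤ 2 ^ m * x ^ (t + 1) := by
    have h1 : T ≤ ∑ e ∈ Finset.Icc (t+1) m, (m.choose e : ℝ) * x ^ (t + 1) := by
      apply Finset.sum_le_sum
      intro e he
      rw [Finset.mem_Icc] at he
      have hxe : x ^ e ≤ x ^ (t + 1) := pow_le_pow_of_le_one hx0.le hx1 he.1
      have h1x : (1 - x) ^ (m - e) ≤ 1 := pow_le_one₀ (by linarith) (by linarith)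
      have hCpos : (0:ℝ) ≤ (m.choose e : ℝ) := Nat.cast_nonneg _
      calc (m.choose e : ℝ) * x ^ e * (1 - x) ^ (m - e)
          ≤ (m.choose e : ℝ) * x ^ e * 1 := by
            apply mul_le_mul_of_nonneg_left h1x (by positivity)
        _ = (m.choose e : ℝ) * x ^ e := by ring
        _ ≤ (m.choose e : ℝ) * x ^ (t + 1) := mul_le_mul_of_nonneg_left hxe hCpos
    have h2 : ∑ e ∈ Finset.Icc (t+1) m, (m.choose e : ℝ) ≤ 2 ^ m := by
      have hnat : ∑ e ∈ Finset.Icc (t+1) m, m.choose e ≤ ∑ e ∈ Finset.range (m+1), m.choose e := by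
        apply Finset.sum_le_sum_of_subset
        intro e he
        rw [Finset.mem_Icc] at he
        rw [Finset.mem_range]
        omega
      rw [Nat.sum_range_choose] at hnat
      exact_mod_cast hnat
    calc T ≤ ∑ e ∈ Finset.Icc (t+1) m, (m.choose e : ℝ) * x ^ (t + 1) := h1
      _ = (∑ e ∈ Finset.Icc (t+1) m, (m.choose e : ℝ)) * x ^ (t + 1) := by
          rw [Finset.sum_mul]
      _ ≤ 2 ^ m * x ^ (t + 1) := by
          apply mul_le_mul_of_nonneg_right h2 (by positivity)
  have hc1 : (1:ℝ) ≤ c := by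
    rw [hc]
    exact_mod_cast Nat.one_le_iff_ne_zero.mpr (Nat.choose_pos (by omega : t ≤ m)).ne'
  have hbern : 1 - (m:ℝ) * x ≤ (1 - x) ^ (m - t) := by
    have h1 : 1 + (m:ℝ) * (-x) ≤ (1 + (-x)) ^ m := by
      apply one_add_mul_le_pow (by linarith)
    have h2 : (1 - x) ^ m ≤ (1 - x) ^ (m - t) :=
      pow_le_pow_of_le_one (by linarith) (by linarith) (by omega)
    have : (1:ℝ) + (m:ℝ) * (-x) = 1 - m * x := by ring
    rw [this] at h1
    calc (1:ℝ) - m * x ≤ (1 + (-x)) ^ m := h1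
      _ = (1 - x) ^ m := by ring_nf
      _ ≤ (1 - x) ^ (m - t) := h2
  have hmx : (m:ℝ) * x + 2 ^ m * x + x ≤ 1 := by nlinarith
  have hxt : (0:ℝ) < x ^ t := pow_pos hx0 t
  -- chain
  have key1 : 2 ^ m * x ^ (t+1) < (1 - (m:ℝ) * x) * x ^ t := by
    have : x ^ (t+1) = x * x ^ t := by ring
    rw [this]
    have h2x : 2 ^ m * x < 1 - (m:ℝ) * x := by linarith
    calc (2:ℝ) ^ m * (x * x ^ t) = (2 ^ m * x) * x ^ t := by ring
      _ < (1 - (m:ℝ) * x) * x ^ t := by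
          apply mul_lt_mul_of_pos_right h2x hxt
  have key2 : (1 - (m:ℝ) * x) * x ^ t ≤ (1 - x) ^ (m - t) * x ^ t :=
    mul_le_mul_of_nonneg_right hbern hxt.le
  have key3 : (1 - x) ^ (m - t) * x ^ t ≤ ((t:ℝ) - 1) * c * ((1 - x) ^ (m - t) * x ^ t) := by
    have ht2 : (2:ℝ) ≤ (t:ℝ) := by exact_mod_cast ht
    have hpos : (0:ℝ) ≤ (1 - x) ^ (m - t) * x ^ t :=
      mul_nonneg (pow_nonneg (by linarith) _) hxt.le
    have h1 : (1:ℝ) ≤ ((t:ℝ) - 1) * c := by nlinarith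
    exact le_mul_of_one_le_left hpos h1
  have hD : D m t x = T - ((t:ℝ) - 1) * c * ((1 - x) ^ (m - t) * x ^ t) := by
    unfold D
    rw [hsplit]
    ring
  rw [hD]
  linarith

def psi (m t : ℕ) (x : ℝ) : ℝ :=
  (∑ k ∈ Finset.range (m - t + 1), (m.choose (t + k) : ℝ) * (x / (1 - x)) ^ k)
    - (t : ℝ) * (m.choose t : ℝ)

lemma D_eq_psi (m t : ℕ) (htm : t ≤ m) (x : ℝ) (hx0 : 0 < x) (hx1 : x < 1) :
    D m t x = x ^ t * (1 - x) ^ (m - t) * psi m t x := by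
  have h1x : (0:ℝ) < 1 - x := by linarith
  have hG : G m t x = ∑ k ∈ Finset.range (m - t + 1),
      (m.choose (t + k) : ℝ) * x ^ (t + k) * (1 - x) ^ (m - (t + k)) := by
    unfold G
    rw [← Finset.Ico_add_one_right_eq_Icc, Finset.sum_Ico_eq_sum_range]
    rw [show m + 1 - t = m - t + 1 by omega]
  unfold D psi
  rw [hG, mul_sub, Finset.mul_sum]
  congr 1
  · apply Finset.sum_congr rfl
    intro k hk
    rw [Finset.mem_range] at hk
    have hk' : k ≤ m - t := by omega
    have hsp : (1 - x) ^ (m - t) = (1 - x) ^ (m - t - k) * (1 - x) ^ k := by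
      rw [← pow_add]
      congr 1
      omega
    have hmk : m - (t + k) = m - t - k := by omega
    rw [hmk, hsp, div_pow, pow_add]
    field_simp
  · ring

lemma D_zeros_unique (m t : ℕ) (ht : 2 ≤ t) (h2t : t + t ≤ m) (c1 c2 : ℝ)
    (h1 : c1 ∈ Ioo (0:ℝ) 1) (h2 : c2 ∈ Ioo (0:ℝ) 1) (hlt : c1 < c2)
    (hd1 : D m t c1 = 0) (hd2 : D m t c2 = 0) : False := by
  have htm : t ≤ m := by omega
  have e1 := D_eq_psi m t htm c1 h1.1 h1.2
  have e2 := D_eq_psi m t htm c2 h2.1 h2.2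
  have hf1 : c1 ^ t * (1 - c1) ^ (m - t) ≠ 0 :=
    ne_of_gt (mul_pos (pow_pos h1.1 _) (pow_pos (by linarith [h1.2] : (0:ℝ) < 1 - c1) _))
  have hf2 : c2 ^ t * (1 - c2) ^ (m - t) ≠ 0 :=
    ne_of_gt (mul_pos (pow_pos h2.1 _) (pow_pos (by linarith [h2.2] : (0:ℝ) < 1 - c2) _))
  have hp1 : psi m t c1 = 0 := by
    have h0 : c1 ^ t * (1 - c1) ^ (m - t) * psi m t c1 = 0 := e1 ▸ hd1
    exact (mul_eq_zero.mp h0).resolve_left hf1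
  have hp2 : psi m t c2 = 0 := by
    have h0 : c2 ^ t * (1 - c2) ^ (m - t) * psi m t c2 = 0 := e2 ▸ hd2
    exact (mul_eq_zero.mp h0).resolve_left hf2
  -- strict monotonicity of psi
  set u1 : ℝ := c1 / (1 - c1) with hu1
  set u2 : ℝ := c2 / (1 - c2) with hu2
  have h1c1 : (0:ℝ) < 1 - c1 := by linarith [h1.2]
  have h1c2 : (0:ℝ) < 1 - c2 := by linarith [h2.2]
  have hu1pos : 0 ≤ u1 := div_nonneg h1.1.le h1c1.le
  have hul : u1 < u2 := by
    rw [hu1, hu2, div_lt_div_iff₀ h1c1 h1c2]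
    nlinarith
  have hmono : psi m t c1 < psi m t c2 := by
    unfold psi
    apply sub_lt_sub_right
    apply Finset.sum_lt_sum
    · intro k hk
      exact mul_le_mul_of_nonneg_left (pow_le_pow_left₀ hu1pos hul.le k) (Nat.cast_nonneg _)
    · refine ⟨m - t, Finset.self_mem_range_succ _, ?_⟩
      have hC : (0:ℝ) < (m.choose (t + (m - t)) : ℝ) := by
        have : t + (m - t) = m := by omega
        rw [this]
        simp
      exact mul_lt_mul_of_pos_left (pow_lt_pow_left₀ hul hu1pos (by omega)) hC
  rw [hp1, hp2] at hmono
  exact lt_irrefl 0 hmono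

lemma hasDerivAt_G_term (m e : ℕ) (hem : e ≤ m) (x : ℝ) :
    HasDerivAt (fun x : ℝ => (m.choose e : ℝ) * x ^ e * (1 - x) ^ (m - e))
      ((e : ℝ) * (m.choose e : ℝ) * x ^ (e - 1) * (1 - x) ^ (m - e)
        - ((e + 1 : ℕ) : ℝ) * (m.choose (e+1) : ℝ) * x ^ e * (1 - x) ^ (m - (e+1))) x := by
  have h1 : HasDerivAt (fun x : ℝ => (1 : ℝ) - x) (-1) x := by
    simpa using (hasDerivAt_id x).const_sub 1
  have h2 := (h1.fun_pow (m - e))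
  have h3 := ((hasDerivAt_pow e x).const_mul ((m.choose e : ℝ))).fun_mul h2
  refine HasDerivAt.congr_deriv h3 (Eq.symm ?_)
  have hc : ((m.choose (e+1) : ℝ)) * ((e+1 : ℕ) : ℝ) = (m.choose e : ℝ) * ((m - e : ℕ) : ℝ) := by
    exact_mod_cast congrArg (Nat.cast : ℕ → ℝ) (Nat.choose_succ_right_eq m e)
  have hsub : ((m - e : ℕ) : ℝ) = (m : ℝ) - e := Nat.cast_sub hem
  have hsub2 : m - (e+1) = m - e - 1 := by omega
  rw [hsub2]
  push_cast [hsub] at hc ⊢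
  linear_combination (-(x ^ e * (1 - x) ^ (m - e - 1))) * hc

lemma hasDerivAt_G (m t : ℕ) (htm : t ≤ m) (x : ℝ) :
    HasDerivAt (G m t)
      ((t : ℝ) * (m.choose t : ℝ) * x ^ (t - 1) * (1 - x) ^ (m - t)) x := by
  set b : ℕ → ℝ := fun e => (e : ℝ) * (m.choose e : ℝ) * x ^ (e - 1) * (1 - x) ^ (m - e) with hb
  have hsum : HasDerivAt (G m t) (∑ e ∈ Finset.Icc t m, (b e - b (e+1))) x := by
    apply HasDerivAt.fun_sum
    intro e he
    rw [Finset.mem_Icc] at he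
    simpa [hb] using hasDerivAt_G_term m e he.2 x
  have htel : (∑ e ∈ Finset.Icc t m, (b e - b (e+1))) = b t - b (t + (m + 1 - t)) := by
    rw [show Finset.Icc t m = Finset.Ico t (m+1) by rw [Finset.Ico_add_one_right_eq_Icc],
      Finset.sum_Ico_eq_sum_range]
    exact Finset.sum_range_sub' (fun i => b (t + i)) (m + 1 - t)
  have h0 : b (t + (m + 1 - t)) = 0 := by
    have : t + (m + 1 - t) = m + 1 := by omega
    simp [hb, this, Nat.choose_succ_self]
  rw [htel, h0, sub_zero] at hsum
  exact hsum

lemma hasDerivAt_PP (m t : ℕ) (ht : 1 ≤ t) (htm : t ≤ m) (x : ℝ) :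
    HasDerivAt (PP m t) (D m t x) x := by
  have hG := hasDerivAt_G m t htm x
  have h1 : HasDerivAt (fun x : ℝ => -x * G m t x)
      (-1 * G m t x + -x * ((t : ℝ) * (m.choose t : ℝ) * x ^ (t - 1) * (1 - x) ^ (m - t))) x :=
    ((hasDerivAt_id x).neg.mul hG)
  have h2 : HasDerivAt (fun x : ℝ => 2 * ∫ z in (0:ℝ)..x, G m t z) (2 * G m t x) x :=
    (((continuous_G m t).integral_hasStrictDerivAt 0 x).hasDerivAt).const_mul 2
  have h3 := h1.add h2
  have hx : x * x ^ (t - 1) = x ^ t := by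
    rw [← pow_succ']
    congr 1
    omega
  refine HasDerivAt.congr_deriv h3 (Eq.symm ?_)
  unfold D
  rw [← hx]
  ring

lemma continuous_PP (m t : ℕ) (ht : 1 ≤ t) (htm : t ≤ m) : Continuous (PP m t) :=
  continuous_iff_continuousAt.mpr fun x => (hasDerivAt_PP m t ht htm x).continuousAt

lemma PP_zero (m t : ℕ) : PP m t 0 = 0 := by
  simp [PP]

lemma PP_roots_aux (m t : ℕ) (ht : 2 ≤ t) (h2t : t + t ≤ m) (y1 y2 : ℝ)
    (hy1 : y1 ∈ Ioc (0:ℝ) 1) (hy2 : y2 ∈ Ioc (0:ℝ) 1) (h12 : y1 < y2)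
    (hr1 : PP m t y1 = 0) (hr2 : PP m t y2 = 0) : False := by
  have ht1 : 1 ≤ t := by omega
  have htm : t ≤ m := by omega
  have hcont := continuous_PP m t ht1 htm
  obtain ⟨c1, hc1mem, hc1⟩ := exists_hasDerivAt_eq_zero hy1.1 hcont.continuousOn
    (by rw [PP_zero, hr1]) (fun x _ => hasDerivAt_PP m t ht1 htm x)
  obtain ⟨c2, hc2mem, hc2⟩ := exists_hasDerivAt_eq_zero h12 hcont.continuousOn
    (by rw [hr1, hr2]) (fun x _ => hasDerivAt_PP m t ht1 htm x)
  exact D_zeros_unique m t ht h2t c1 c2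
    ⟨hc1mem.1, lt_of_lt_of_le (hc1mem.2.trans h12) hy2.2⟩
    ⟨hy1.1.trans hc2mem.1, lt_of_lt_of_le hc2mem.2 hy2.2⟩
    (hc1mem.2.trans hc2mem.1) hc1 hc2

lemma PP_roots_eq (m t : ℕ) (ht : 2 ≤ t) (h2t : t + t ≤ m) (y1 y2 : ℝ)
    (hy1 : y1 ∈ Ioc (0:ℝ) 1) (hy2 : y2 ∈ Ioc (0:ℝ) 1)
    (hr1 : PP m t y1 = 0) (hr2 : PP m t y2 = 0) : y1 = y2 := by
  rcases lt_trichotomy y1 y2 with h | h | h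
  · exact absurd (PP_roots_aux m t ht h2t y1 y2 hy1 hy2 h hr1 hr2) (by simp)
  · exact h
  · exact absurd (PP_roots_aux m t ht h2t y2 y1 hy2 hy1 h hr2 hr1) (by simp)

lemma PP_exists_root (m t : ℕ) (ht : 2 ≤ t) (h2t : t + t ≤ m) :
    ∃ x ∈ Ioc (0:ℝ) 1, PP m t x = 0 := by
  have ht1 : 1 ≤ t := by omega
  have htm : t ≤ m := by omega
  set K : ℝ := 2 ^ m + m + 1 with hK
  have hK1 : (1:ℝ) < K := by
    have h0 : (0:ℝ) < 2 ^ m := by positivity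
    have h1 : (0:ℝ) ≤ (m:ℝ) := Nat.cast_nonneg _
    rw [hK]; nlinarith
  set ε : ℝ := K⁻¹ with hε
  have hε0 : 0 < ε := by rw [hε]; positivity
  have hε1 : ε < 1 := by
    rw [hε]
    exact inv_lt_one_of_one_lt₀ hK1
  have hanti : StrictAntiOn (PP m t) (Icc 0 ε) := by
    apply strictAntiOn_of_deriv_neg (convex_Icc 0 ε)
      (continuous_PP m t ht1 htm).continuousOn
    intro x hx
    rw [interior_Icc] at hx
    rw [(hasDerivAt_PP m t ht1 htm x).deriv]
    apply D_neg_near_zero m t ht h2t x hx.1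
    have : x < ε := hx.2
    calc x * K ≤ ε * K := by nlinarith [hx.1]
      _ = 1 := by rw [hε]; field_simp
  have hPε : PP m t ε < 0 := by
    have := hanti (left_mem_Icc.mpr hε0.le) (right_mem_Icc.mpr hε0.le) hε0
    rwa [PP_zero] at this
  have hP1 := PP_one_pos m t ht1 h2t
  have hIVT := intermediate_value_Ioo hε1.le (continuous_PP m t ht1 htm).continuousOn
  have h0mem : (0:ℝ) ∈ Ioo (PP m t ε) (PP m t 1) := ⟨hPε, hP1⟩
  obtain ⟨x, hxmem, hx⟩ := hIVT h0mem
  exact ⟨x, ⟨hε0.trans hxmem.1, hxmem.2.le⟩, hx⟩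


end GldpcAux

/-- For `2 ≤ t ≤ ⌊(n−1)/2⌋`, the function `P(x) = −x g(x) + 2∫₀ˣ g(z) dz` has exactly
one root in `(0,1]`. -/
theorem gldpc_trial_entropy_unique_root (n t : ℕ) (ht1 : 2 ≤ t) (ht2 : t ≤ (n - 1) / 2) :
    ∃! x : ℝ, x ∈ Ioc (0:ℝ) 1 ∧ gldpcP n t x = 0 := by
  have hP : gldpcP n t = GldpcAux.PP (n - 1) t := rfl
  have h2t : t + t ≤ n - 1 := by omega
  obtain ⟨x, hxmem, hx⟩ := GldpcAux.PP_exists_root (n - 1) t ht1 h2t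
  refine ⟨x, ⟨hxmem, by rw [hP]; exact hx⟩, ?_⟩
  rintro y ⟨hymem, hy⟩
  rw [hP] at hy
  exact GldpcAux.PP_roots_eq (n - 1) t ht1 h2t y x hymem hxmem hy hx
end
end
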